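/- arXiv:2406.06317 — 2 statements merged into one kernel-verified Lean document; each statement's English description precedes it below -/
import Mathlib

section
/- Let G be a connected graph with at least 3 vertices that is not complete. Then the rotation graph R(G) contains a 5-cycle. Consequently R(G) is not bipartite and χ(R(G)) ≥ 3. -/
open scoped Classical

universe u

variable {V : Type u}

/-- A rooted tree structure on a support set: data only, well-formedness is `RTree.WF`. -/
structure RTree (V : Type u) where
  supp : Set V
  root : V
  parent : V → Option V

namespace RTree

def parentRel (T : RTree V) (a b : V) : Prop := T.parent a = some b

/-- `u` is an ancestor of `v` in `T` (reflexively). -/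
def isAncestor (T : RTree V) (u v : V) : Prop :=
  Relation.ReflTransGen T.parentRel v u

def WF (T : RTree V) : Prop :=
  T.root ∈ T.supp ∧
  T.parent T.root = none ∧
  (∀ v, v ∉ T.supp → T.parent v = none) ∧
  (∀ v ∈ T.supp, v ≠ T.root → ∃ u ∈ T.supp, T.parent v = some u) ∧
  (∀ v ∈ T.supp, T.isAncestor T.root v)

/-- The vertex set of the subtree `T|c` rooted at `c`. -/
def descendants (T : RTree V) (c : V) : Set V :=
  {v | v ∈ T.supp ∧ T.isAncestor c v}

/-- Iterated parent. -/
def pIter (T : RTree V) : ℕ → V → Option V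
  | 0, w => some w
  | n + 1, w => (T.parent w).bind (T.pIter n)

/-- The depth `d_{T,v}` of `v` in `T` (distance to the root). -/
noncomputable def depthOf (T : RTree V) (v : V) : ℕ :=
  sInf {n | T.pIter n v = some T.root}

/-- The subtree of `T` rooted at `c`. -/
noncomputable def subtreeAt (T : RTree V) (c : V) : RTree V where
  supp := T.descendants c
  root := c
  parent := fun w => if w = c then none else if w ∈ T.descendants c then T.parent w else none

/-- The vertex at depth `i` on the path from the root to `v`. -/
noncomputable def ancAt (T : RTree V) (v : V) (i : ℕ) : V :=
  (T.pIter (T.depthOf v - i) v).getD T.root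

/-- Insertion `T(i,x,v)` of a new vertex `x` at depth `i` along the root-to-`v` path:
`i = 0` makes `x` the new root, `i = d_{T,v}+1` adds `x` as a new child of `v`, and
for `1 ≤ i ≤ d_{T,v}` the `i`-th edge of the root-to-`v` path is subdivided by `x`. -/
noncomputable def insertAt (T : RTree V) (i : ℕ) (x v : V) : RTree V :=
  if i = 0 then
    { supp := insert x T.supp
      root := x
      parent := fun w => if w = x then none else if w = T.root then some x else T.parent w }
  else if i = T.depthOf v + 1 then
    { supp := insert x T.supp
      root := T.root
      parent := fun w => if w = x then some v else T.parent w }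
  else
    { supp := insert x T.supp
      root := T.root
      parent := fun w =>
        if w = x then some (T.ancAt v (i - 1))
        else if w = T.ancAt v i then some x
        else T.parent w }

/-- Elimination `p(T,x)` of a vertex `x` (meaningful when `x` has at most one child). -/
noncomputable def elim (T : RTree V) (x : V) : RTree V where
  supp := T.supp \ {x}
  root :=
    if T.root = x then (if h : ∃ w, T.parent w = some x then h.choose else T.root) else T.root
  parent := fun w =>
    if w = x then none
    else if T.parent w = some x then T.parent x
    else T.parent w

end RTree

/-- Reachability inside the vertex set `s`, i.e. in the induced subgraph `G[s]`. -/
def reachWithin (G : SimpleGraph V) (s : Set V) : V → V → Prop :=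
  Relation.ReflTransGen (fun a b => a ∈ s ∧ b ∈ s ∧ G.Adj a b)

/-- Recursive definition of a search tree: the children of the root are the roots of
search trees on the connected components of the graph minus the root. -/
inductive IsSearchTreeRec {V : Type u} (G : SimpleGraph V) : RTree V → Prop
  | intro (T : RTree V) (hwf : T.WF)
      (hconn : ∀ a ∈ T.supp, ∀ b ∈ T.supp, reachWithin G T.supp a b)
      (hcomp : ∀ c, T.parent c = some T.root →
        ∀ w, w ∈ T.descendants c ↔
          (w ∈ T.supp ∧ w ≠ T.root ∧ reachWithin G (T.supp \ {T.root}) c w))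
      (hrec : ∀ c, T.parent c = some T.root → IsSearchTreeRec G (T.subtreeAt c)) :
      IsSearchTreeRec G T

/-- `T` is a search tree on the induced subgraph `G[s]`. -/
def IsSearchTreeOn (G : SimpleGraph V) (s : Set V) (T : RTree V) : Prop :=
  T.supp = s ∧ IsSearchTreeRec G T

/-- `T` is a search tree on `G`. -/
def IsSearchTree (G : SimpleGraph V) (T : RTree V) : Prop :=
  IsSearchTreeOn G Set.univ T

/-- The `uv`-rotation of `T` (for `v` a child of `u`): `u` becomes a child of `v`, `v` takes
`u`'s old parent, and each subtree `S` of `v` is reattached below `u` iff `u` has a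
`G`-neighbour in `S`. -/
noncomputable def rotate (G : SimpleGraph V) (T : RTree V) (u v : V) : RTree V where
  supp := T.supp
  root := if T.root = u then v else T.root
  parent := fun w =>
    if w = v then T.parent u
    else if w = u then some v
    else if T.parent w = some v then
      (if ∃ z ∈ T.descendants w, G.Adj u z then some u else some v)
    else T.parent w

def IsRotation (G : SimpleGraph V) (S S' : RTree V) : Prop :=
  ∃ u v, S.parent v = some u ∧ S' = rotate G S u v

def rotAdj (G : SimpleGraph V) (S S' : RTree V) : Prop :=
  S ≠ S' ∧ (IsRotation G S S' ∨ IsRotation G S' S)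

/-- The rotation graph of the induced subgraph `G[s]`: vertices are the search trees on
`G[s]`, two trees being adjacent iff they differ by a single rotation. -/
def rotationGraphOn (G : SimpleGraph V) (s : Set V) :
    SimpleGraph {T : RTree V // IsSearchTreeOn G s T} where
  Adj T T' := rotAdj G T.1 T'.1
  symm := ⟨fun T T' h => ⟨Ne.symm h.1, Or.symm h.2⟩⟩
  loopless := ⟨fun T h => h.1 rfl⟩

/-- A vertex of `K` of maximal depth in `T` (the vertex `v_{λ(T)}`). -/
noncomputable def deepestIn (T : RTree V) (K : Set V) : V :=
  if h : ∃ u, u ∈ K ∧ ∀ w ∈ K, T.depthOf w ≤ T.depthOf u then h.choose else T.root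

/-- `u` and `v` have different relative order in `T` and `T'`. -/
def diffRelOrder (T T' : RTree V) (u v : V) : Prop :=
  (T.isAncestor u v ∧ ¬ T'.isAncestor u v) ∨ (¬ T.isAncestor u v ∧ T'.isAncestor u v)

/-- The step from `S` to `S'` is a rotation of the pair `u`, `v`. -/
def isUVStep (G : SimpleGraph V) (u v : V) (S S' : RTree V) : Prop :=
  (S.parent v = some u ∧ S' = rotate G S u v) ∨ (S.parent u = some v ∧ S' = rotate G S v u)

/-- A threshold graph: obtainable from the one-vertex graph by repeatedly adding either an
isolated vertex or a universal vertex. -/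
def IsThresholdGraph {V : Type u} [Fintype V] (G : SimpleGraph V) : Prop :=
  ∃ e : Fin (Fintype.card V) ≃ V,
    ∀ i : Fin (Fintype.card V),
      (∀ j, j < i → ¬ G.Adj (e i) (e j)) ∨ (∀ j, j < i → G.Adj (e i) (e j))

/-- The complete split graph `SPK_{p,q}`: a clique of size `p` completely joined to an
independent set of size `q`. -/
def completeSplitGraph (p q : ℕ) : SimpleGraph (Fin p ⊕ Fin q) where
  Adj a b := a ≠ b ∧ (a.isLeft = true ∨ b.isLeft = true)
  symm := ⟨fun a b h => ⟨Ne.symm h.1, Or.symm h.2⟩⟩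
  loopless := ⟨fun a h => h.1 rfl⟩

namespace C5Aux

variable {V : Type u}

noncomputable def prevOf : List V → V → Option V
  | [], _ => none
  | [_], _ => none
  | x :: y :: l, w => if w = y then some x else prevOf (y :: l) w

lemma prevOf_nil (w : V) : prevOf ([] : List V) w = none := rfl
lemma prevOf_single (x w : V) : prevOf [x] w = none := rfl

lemma prevOf_cons' (m : V) (L : List V) (hL : L ≠ []) (w : V) :
    prevOf (m :: L) w = if some w = L.head? then some m else prevOf L w := by
  cases L with
  | nil => simp at hL
  | cons y l =>
    simp only [prevOf, List.head?_cons]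
    by_cases h : w = y <;> simp [h]

lemma prevOf_not_mem (L : List V) (w : V) (h : w ∉ L) : prevOf L w = none := by
  induction L with
  | nil => rfl
  | cons x l ih =>
    cases l with
    | nil => rfl
    | cons y l' =>
      simp only [prevOf]
      rw [if_neg (by simp at h; tauto)]
      exact ih (by simp at h ⊢; tauto)

lemma prevOf_head (x : V) (l : List V) (h : x ∉ l) : prevOf (x :: l) x = none := by
  cases l with
  | nil => rfl
  | cons y l' =>
    simp only [prevOf]
    rw [if_neg (by simp at h; tauto)]
    exact prevOf_not_mem _ _ (by simp at h ⊢; tauto)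

lemma prevOf_mem_dropLast {L : List V} {w u : V} (h : prevOf L w = some u) :
    u ∈ L.dropLast := by
  induction L with
  | nil => simp [prevOf] at h
  | cons x l ih =>
    cases l with
    | nil => simp [prevOf] at h
    | cons y l' =>
      simp only [prevOf] at h
      by_cases hw : w = y
      · rw [if_pos hw] at h
        cases h
        simp [List.dropLast]
      · rw [if_neg hw] at h
        have := ih h
        simp [List.dropLast] at this ⊢
        tauto

lemma prevOf_mem {L : List V} {w u : V} (h : prevOf L w = some u) : u ∈ L :=
  (List.dropLast_sublist L).subset (prevOf_mem_dropLast h)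

lemma prevOf_mem_tail {L : List V} {w u : V} (h : prevOf L w = some u) : w ∈ L.tail := by
  induction L with
  | nil => simp [prevOf] at h
  | cons x l ih =>
    cases l with
    | nil => simp [prevOf] at h
    | cons y l' =>
      simp only [prevOf] at h
      by_cases hw : w = y
      · simp [hw]
      · rw [if_neg hw] at h
        have := ih h
        simp at this ⊢
        tauto

lemma prevOf_inj {L : List V} (hnd : L.Nodup) {w w' u : V}
    (h : prevOf L w = some u) (h' : prevOf L w' = some u) : w = w' := by
  induction L with
  | nil => simp [prevOf] at h
  | cons x l ih =>
    cases l with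
    | nil => simp [prevOf] at h
    | cons y l' =>
      simp only [prevOf] at h h'
      by_cases hw : w = y <;> by_cases hw' : w' = y
      · rw [hw, hw']
      · rw [if_pos hw] at h
        rw [if_neg hw'] at h'
        cases h
        exact absurd (prevOf_mem h') (by simp at hnd ⊢; tauto)
      · rw [if_neg hw] at h
        rw [if_pos hw'] at h'
        cases h'
        exact absurd (prevOf_mem h) (by simp at hnd ⊢; tauto)
      · rw [if_neg hw] at h
        rw [if_neg hw'] at h'
        exact ih (List.Nodup.of_cons hnd) h h'

lemma head?_append_cons (M : List V) (x : V) (l : List V) :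
    (M ++ x :: l).head? = some (M.headD x) := by
  cases M <;> simp

lemma prevOf_append_head (M : List V) (x : V) (l : List V) (hM : x ∉ M) (hl : x ∉ l) :
    prevOf (M ++ x :: l) x = M.getLast? := by
  induction M with
  | nil =>
    simp only [List.nil_append, List.getLast?_nil]
    exact prevOf_head x l hl
  | cons m M ih =>
    cases M with
    | nil =>
      simp [prevOf]
    | cons m2 M2 =>
      have hx : x ∉ (m2 :: M2) := by simp at hM ⊢; tauto
      rw [show (m :: m2 :: M2) ++ x :: l = m :: ((m2 :: M2) ++ x :: l) by simp]
      rw [prevOf_cons' _ _ (by simp) x, head?_append_cons, if_neg ?_]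
      · rw [ih hx, List.getLast?_cons_cons]
      · simp only [List.headD_cons, Option.some.injEq]
        intro h; rw [h] at hM; simp at hM

lemma prevOf_append_right (M : List V) {x w : V} (l : List V) (hM : w ∉ M) (hx : w ≠ x) :
    prevOf (M ++ x :: l) w = prevOf (x :: l) w := by
  induction M with
  | nil => rfl
  | cons m M ih =>
    rw [show (m :: M) ++ x :: l = m :: (M ++ x :: l) by simp]
    rw [prevOf_cons' _ _ (by simp) w, head?_append_cons, if_neg ?_,
      ih (by simp at hM; tauto)]
    simp only [Option.some.injEq]
    intro h
    cases M with
    | nil => exact hx (by simpa using h)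
    | cons m2 M2 => rw [h] at hM; simp at hM

lemma prevOf_append_congr (M : List V) {L L' : List V} {w : V} (hL : L ≠ []) (hL' : L' ≠ [])
    (h1 : some w ≠ L.head?) (h2 : some w ≠ L'.head?) (h : prevOf L w = prevOf L' w) :
    prevOf (M ++ L) w = prevOf (M ++ L') w := by
  induction M with
  | nil => simpa using h
  | cons m M ih =>
    rw [show (m :: M) ++ L = m :: (M ++ L) by simp, show (m :: M) ++ L' = m :: (M ++ L') by simp]
    rw [prevOf_cons' _ _ (by simp [hL]) w, prevOf_cons' _ _ (by simp [hL']) w, ih]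
    obtain ⟨x, L, rfl⟩ : ∃ x l, L = x :: l := by
      cases L with | nil => simp at hL | cons a b => exact ⟨a, b, rfl⟩
    obtain ⟨x', L', rfl⟩ : ∃ x l, L' = x :: l := by
      cases L' with | nil => simp at hL' | cons a b => exact ⟨a, b, rfl⟩
    rw [head?_append_cons, head?_append_cons]
    cases M with
    | nil =>
      simp only [List.headD_nil]
      simp only [show ¬ (some w = some x) by simpa using h1,
        show ¬ (some w = some x') by simpa using h2, ↓reduceIte]
    | cons m2 M2 => simp

end C5Aux
namespace C5Aux
variable {V : Type u}

lemma RTree.ext' {T T' : RTree V} (h1 : T.supp = T'.supp) (h2 : T.root = T'.root)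
    (h3 : T.parent = T'.parent) : T = T' := by
  cases T; cases T'; cases h1; cases h2; cases h3; rfl

noncomputable def chainT (L : List V) (d : V) : RTree V :=
  { supp := {x | x ∈ L}, root := L.headD d, parent := prevOf L }

noncomputable def prependV (x : V) (T : RTree V) : RTree V :=
  { supp := insert x T.supp, root := x,
    parent := fun w => if w = T.root then some x else T.parent w }

noncomputable def starT (M : List V) (a b c : V) : RTree V :=
  { supp := {x | x ∈ M ++ [b, a, c]},
    root := (M ++ [b]).headD b,
    parent := fun w => if w = a then some b else if w = c then some b
      else prevOf (M ++ [b]) w }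

def connSet (G : SimpleGraph V) (s : Set V) : Prop :=
  ∀ p ∈ s, ∀ q ∈ s, reachWithin G s p q

lemma reachWithin_mono {G : SimpleGraph V} {s t : Set V} (hst : s ⊆ t) {p q : V}
    (h : reachWithin G s p q) : reachWithin G t p q :=
  Relation.ReflTransGen.mono (fun a b (hab : a ∈ s ∧ b ∈ s ∧ G.Adj a b) =>
    (⟨hst hab.1, hst hab.2.1, hab.2.2⟩ : a ∈ t ∧ b ∈ t ∧ G.Adj a b)) _ _ h

lemma reachWithin_symm {G : SimpleGraph V} {s : Set V} {p q : V}
    (h : reachWithin G s p q) : reachWithin G s q p :=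
  (@Relation.ReflTransGen.stdSymm _ _ ⟨fun _ _ hab => ⟨hab.2.1, hab.1, hab.2.2.symm⟩⟩).symm _ _ h

lemma prepend_isSearchTreeRec {G : SimpleGraph V} {T : RTree V} {x : V}
    (hT : IsSearchTreeRec G T) (hx : x ∉ T.supp)
    (hc : connSet G (insert x T.supp)) : IsSearchTreeRec G (prependV x T) := by
  obtain ⟨_, hwf, hconn, hcomp0, hrec0⟩ := hT
  have hT : IsSearchTreeRec G T := ⟨T, hwf, hconn, hcomp0, hrec0⟩
  obtain ⟨hw1, hw2, hw3, hw4, hw5⟩ := hwf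
  have hxr : x ≠ T.root := fun h => hx (h ▸ hw1)
  have hpx : (prependV x T).parent x = none := by
    simp only [prependV]; rw [if_neg hxr]; exact hw3 x hx
  have hmono : ∀ u p, T.parentRel u p → (prependV x T).parentRel u p := by
    intro u p h
    unfold RTree.parentRel at h ⊢
    simp only [prependV]
    rw [if_neg ?_]
    · exact h
    · rintro rfl; rw [hw2] at h; exact (nomatch h)
  have hmanc : ∀ v, T.isAncestor T.root v → (prependV x T).isAncestor T.root v := by
    intro v h
    exact Relation.ReflTransGen.mono hmono _ _ h
  have hdesc : (prependV x T).descendants T.root = T.supp := by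
    ext w
    constructor
    · rintro ⟨hw, hanc⟩
      rcases (Relation.ReflTransGen.cases_head hanc) with h | ⟨m, hm, _⟩
      · exact h ▸ hw1
      · unfold RTree.parentRel at hm
        have hwx : w ≠ x := by rintro rfl; rw [hpx] at hm; exact nomatch hm
        rcases hw with h | h
        · exact absurd h hwx
        · exact h
    · intro hw
      exact ⟨Or.inr hw, hmanc w (hw5 w hw)⟩
  have hchild : ∀ cc, (prependV x T).parent cc = some x → cc = T.root := by
    intro cc h
    by_contra hne
    simp only [prependV] at h
    rw [if_neg hne] at h
    by_cases hcc : cc ∈ T.supp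
    · by_cases hccr : cc = T.root
      · exact hne hccr
      · obtain ⟨u, hu, hpu⟩ := hw4 cc hcc hccr
        rw [h] at hpu
        cases hpu
        exact hx hu
    · rw [hw3 cc hcc] at h; exact nomatch h
  have hrootstep : (prependV x T).parentRel T.root x := by
    unfold RTree.parentRel
    simp [prependV]
  have hsuppx : (prependV x T).supp \ {x} = T.supp := by
    simp only [prependV]
    exact Set.insert_diff_self_of_notMem hx
  refine ⟨_, ⟨Set.mem_insert _ _, hpx, ?_, ?_, ?_⟩, hc, ?_, ?_⟩
  · intro v hv
    simp only [prependV, Set.mem_insert_iff] at hv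
    push_neg at hv
    simp only [prependV]
    rw [if_neg (by rintro rfl; exact hv.2 hw1)]
    exact hw3 v hv.2
  · intro v hv hvx
    rcases hv with h | h
    · exact absurd h hvx
    · by_cases hvr : v = T.root
      · exact ⟨x, Set.mem_insert _ _, by simp only [prependV]; rw [if_pos hvr]⟩
      · obtain ⟨u, hu, hpu⟩ := hw4 v h hvr
        exact ⟨u, Or.inr hu, by simp only [prependV]; rw [if_neg hvr]; exact hpu⟩
  · intro v hv
    rcases hv with h | h
    · exact h ▸ Relation.ReflTransGen.refl
    · exact Relation.ReflTransGen.tail (hmanc v (hw5 v h)) hrootstep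
  · intro cc hcc w
    have hccr := hchild cc hcc
    subst hccr
    rw [Set.ext_iff.mp hdesc w]
    show w ∈ T.supp ↔ w ∈ insert x T.supp ∧ w ≠ x ∧
      reachWithin G (insert x T.supp \ {x}) T.root w
    rw [Set.insert_diff_self_of_notMem hx]
    constructor
    · intro hw
      exact ⟨Or.inr hw, fun h => hx (h ▸ hw), hconn T.root hw1 w hw⟩
    · rintro ⟨hw, hwx, _⟩
      rcases hw with h | h
      · exact absurd h hwx
      · exact h
  · intro cc hcc
    have hccr := hchild cc hcc
    subst hccr
    have heq : (prependV x T).subtreeAt T.root = T := by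
      refine RTree.ext' ?_ rfl ?_
      · exact hdesc
      · funext w
        simp only [RTree.subtreeAt]
        by_cases hwr : w = T.root
        · rw [if_pos hwr, hwr, hw2]
        · rw [if_neg hwr, hdesc]
          by_cases hws : w ∈ T.supp
          · rw [if_pos hws]
            simp only [prependV]
            rw [if_neg hwr]
          · rw [if_neg hws, hw3 w hws]
    rw [heq]
    exact hT

lemma single_isSearchTreeRec {G : SimpleGraph V} (x d : V) :
    IsSearchTreeRec G (chainT [x] d) := by
  have hpar : ∀ w, (chainT [x] d).parent w = none := fun w => rfl
  refine ⟨_, ⟨by simp [chainT], rfl, fun v _ => rfl, ?_, ?_⟩, ?_, ?_, ?_⟩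
  · intro v hv hvx
    simp only [chainT, Set.mem_setOf_eq, List.mem_singleton] at hv
    exact absurd hv hvx
  · intro v hv
    simp only [chainT, Set.mem_setOf_eq, List.mem_singleton] at hv
    subst hv
    exact Relation.ReflTransGen.refl
  · intro p hp q hq
    simp only [chainT, Set.mem_setOf_eq, List.mem_singleton] at hp hq
    subst hp; subst hq
    exact Relation.ReflTransGen.refl
  · intro c hc; rw [hpar] at hc; exact absurd hc (fun h => nomatch h)
  · intro c hc; rw [hpar] at hc; exact absurd hc (fun h => nomatch h)

lemma foldr_supp (M : List V) (B : RTree V) :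
    (M.foldr prependV B).supp = {z | z ∈ M} ∪ B.supp := by
  induction M with
  | nil => simp
  | cons x M ih =>
    show insert x (M.foldr prependV B).supp = _
    rw [ih]
    ext z
    simp [Set.mem_insert_iff, or_assoc]

lemma foldr_isSearchTreeRec {G : SimpleGraph V} {B : RTree V} (hB : IsSearchTreeRec G B) :
    ∀ M : List V, M.Nodup → (∀ m ∈ M, m ∉ B.supp) →
    (∀ L1 L2 : List V, M = L1 ++ L2 → connSet G ({z | z ∈ L2} ∪ B.supp)) →
    IsSearchTreeRec G (M.foldr prependV B) := by
  intro M
  induction M with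
  | nil => intro _ _ _; exact hB
  | cons x M ih =>
    intro hnd hout hcn
    show IsSearchTreeRec G (prependV x (M.foldr prependV B))
    refine prepend_isSearchTreeRec
      (ih (List.Nodup.of_cons hnd) (fun m hm => hout m (List.mem_cons_of_mem _ hm))
        (fun L1 L2 h => hcn (x :: L1) L2 (by rw [h]; rfl))) ?_ ?_
    · rw [foldr_supp]
      rintro (h | h)
      · simp at hnd; exact absurd h (by tauto)
      · exact hout x (by simp) h
    · have : insert x ((M.foldr prependV B).supp) = {z | z ∈ x :: M} ∪ B.supp := by
        rw [foldr_supp]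
        ext z
        simp [Set.mem_insert_iff, or_assoc]
      show connSet G (insert x ((M.foldr prependV B).supp))
      rw [this]
      exact hcn [] (x :: M) rfl

lemma chainT_eq_prepend (x : V) (L : List V) (hL : L ≠ []) (d : V) :
    chainT (x :: L) d = prependV x (chainT L d) := by
  obtain ⟨y, l, rfl⟩ : ∃ y l, L = y :: l := by
    cases L with | nil => simp at hL | cons a b => exact ⟨a, b, rfl⟩
  refine RTree.ext' ?_ rfl ?_
  · ext z; simp [chainT, prependV, Set.mem_insert_iff]
  · funext w
    show prevOf (x :: y :: l) w = if w = (y :: l).headD d then some x else prevOf (y :: l) w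
    rw [prevOf_cons' _ _ (by simp)]
    simp [List.headD_cons]

lemma chainT_foldr (N : List V) (x d : V) :
    chainT (N ++ [x]) d = N.foldr prependV (chainT [x] d) := by
  induction N with
  | nil => rfl
  | cons n N ih =>
    show chainT (n :: (N ++ [x])) d = prependV n (N.foldr prependV (chainT [x] d))
    rw [chainT_eq_prepend n _ (by simp) d, ih]

lemma starT_eq_prepend (x : V) (M : List V) {a b c : V}
    (haM : a ∉ M) (hcM : c ∉ M) (hab : a ≠ b) (hcb : c ≠ b) :
    starT (x :: M) a b c = prependV x (starT M a b c) := by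
  have hahd : a ≠ (M ++ [b]).headD b := by
    cases M with
    | nil => simpa using hab
    | cons m M => simp at haM ⊢; tauto
  have hchd : c ≠ (M ++ [b]).headD b := by
    cases M with
    | nil => simpa using hcb
    | cons m M => simp at hcM ⊢; tauto
  have hhd : (M ++ [b]).headD b = (M.headD b) := by cases M <;> simp
  refine RTree.ext' ?_ ?_ ?_
  · ext z; simp [starT, prependV, Set.mem_insert_iff]
  · show ((x :: M) ++ [b]).headD b = x
    simp
  · funext w
    show (if w = a then some b else if w = c then some b else prevOf ((x :: M) ++ [b]) w)
      = if w = (starT M a b c).root then some x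
        else (if w = a then some b else if w = c then some b else prevOf (M ++ [b]) w)
    by_cases hwa : w = a
    · rw [if_pos hwa, if_neg (by rw [hwa]; exact hahd), if_pos hwa]
    · rw [if_neg hwa]
      by_cases hwc : w = c
      · rw [if_pos hwc, if_neg (by rw [hwc]; exact hchd), if_neg hwa, if_pos hwc]
      · rw [if_neg hwc]
        show prevOf (x :: (M ++ [b])) w = _
        rw [prevOf_cons' _ _ (by simp) w, head?_append_cons]
        show _ = if w = (M ++ [b]).headD b then some x
          else (if w = a then some b else if w = c then some b else prevOf (M ++ [b]) w)
        rw [if_neg hwa, if_neg hwc]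
        by_cases hwh : w = (M ++ [b]).headD b
        · rw [if_pos (by rw [hwh, hhd]), if_pos hwh]
        · rw [if_neg (by intro h; exact hwh (by injection h with h'; rw [h', hhd])), if_neg hwh]

lemma starT_foldr (M : List V) {a b c : V}
    (haM : a ∉ M) (hcM : c ∉ M) (hab : a ≠ b) (hcb : c ≠ b) :
    starT M a b c = M.foldr prependV (starT [] a b c) := by
  induction M with
  | nil => rfl
  | cons m M ih =>
    show starT (m :: M) a b c = prependV m (M.foldr prependV (starT [] a b c))
    rw [starT_eq_prepend m M (by simp at haM; tauto) (by simp at hcM; tauto) hab hcb,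
      ih (by simp at haM; tauto) (by simp at hcM; tauto)]

end C5Aux
namespace C5Aux
variable {V : Type u}

lemma starBase_isSearchTreeRec {G : SimpleGraph V} {a b c : V}
    (hab : G.Adj a b) (hbc : G.Adj b c) (hac : ¬ G.Adj a c) (hACne : a ≠ c) :
    IsSearchTreeRec G (starT [] a b c) := by
  have hAB : a ≠ b := hab.ne
  have hBC : b ≠ c := hbc.ne
  set T := starT ([] : List V) a b c with hTdef
  have hsupp : ∀ z, z ∈ T.supp ↔ (z = b ∨ z = a ∨ z = c) := by
    intro z; simp [starT, hTdef]
  have hroot : T.root = b := rfl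
  have hpar : ∀ w, T.parent w = if w = a then some b else if w = c then some b else none :=
    fun w => rfl
  have hmemb : b ∈ T.supp := (hsupp b).mpr (Or.inl rfl)
  have hmema : a ∈ T.supp := (hsupp a).mpr (Or.inr (Or.inl rfl))
  have hmemc : c ∈ T.supp := (hsupp c).mpr (Or.inr (Or.inr rfl))
  have hparb : T.parent b = none := by rw [hpar, if_neg (Ne.symm hAB), if_neg hBC]
  have hpara : T.parent a = some b := by rw [hpar, if_pos rfl]
  have hparc : T.parent c = some b := by rw [hpar, if_neg (Ne.symm hACne), if_pos rfl]
  have hstepa : T.parentRel a b := hpara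
  have hstepc : T.parentRel c b := hparc
  -- leaves: nothing below a or c
  have hleaf : ∀ x, (x = a ∨ x = c) → ∀ w, T.isAncestor x w → w = x := by
    intro x hx w hw
    rcases Relation.ReflTransGen.cases_tail hw with h | ⟨m, _, hm⟩
    · exact h.symm
    · exfalso
      unfold RTree.parentRel at hm
      rw [hpar] at hm
      by_cases h1 : m = a
      · rw [if_pos h1] at hm
        injection hm with hm
        rcases hx with h | h
        · exact hAB (hm.trans h).symm
        · exact hBC (hm.trans h)
      · by_cases h2 : m = c
        · rw [if_neg h1, if_pos h2] at hm
          injection hm with hm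
          rcases hx with h | h
          · exact hAB (hm.trans h).symm
          · exact hBC (hm.trans h)
        · rw [if_neg h1, if_neg h2] at hm; exact nomatch hm
  have hdesc : ∀ x, (x = a ∨ x = c) → ∀ w, w ∈ T.descendants x ↔ w = x := by
    intro x hx w
    constructor
    · rintro ⟨_, hanc⟩; exact hleaf x hx w hanc
    · rintro rfl
      rcases hx with rfl | rfl
      · exact ⟨hmema, Relation.ReflTransGen.refl⟩
      · exact ⟨hmemc, Relation.ReflTransGen.refl⟩
  -- reachability within supp \ {b} is trivial
  have hreach : ∀ x, (x = a ∨ x = c) → ∀ w, reachWithin G (T.supp \ {b}) x w → w = x := by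
    intro x hx w hw
    induction hw with
    | refl => rfl
    | tail _ hstep ih =>
      exfalso
      obtain ⟨h1, h2, hadj⟩ := hstep
      rw [ih] at hadj
      have hm1 : x = a ∨ x = c := hx
      obtain ⟨hmem, hmb⟩ := h2
      rw [hsupp] at hmem
      rcases hmem with rfl | rfl | rfl
      · exact hmb rfl
      · rcases hm1 with rfl | rfl
        · exact hadj.ne rfl
        · exact hac (hadj.symm)
      · rcases hm1 with rfl | rfl
        · exact hac hadj
        · exact hadj.ne rfl
  have hchild : ∀ cc, T.parent cc = some T.root → cc = a ∨ cc = c := by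
    intro cc h
    rw [hroot, hpar] at h
    by_cases h1 : cc = a
    · exact Or.inl h1
    · by_cases h2 : cc = c
      · exact Or.inr h2
      · rw [if_neg h1, if_neg h2] at h; exact nomatch h
  -- connectivity of supp
  have hconnT : connSet G T.supp := by
    have r1 : reachWithin G T.supp a b := Relation.ReflTransGen.single ⟨hmema, hmemb, hab⟩
    have r2 : reachWithin G T.supp b c := Relation.ReflTransGen.single ⟨hmemb, hmemc, hbc⟩
    have r3 : reachWithin G T.supp a c := Relation.ReflTransGen.trans r1 r2
    intro p hp q hq
    rw [hsupp] at hp hq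
    rcases hp with rfl | rfl | rfl <;> rcases hq with rfl | rfl | rfl
    · exact Relation.ReflTransGen.refl
    · exact reachWithin_symm r1
    · exact r2
    · exact r1
    · exact Relation.ReflTransGen.refl
    · exact r3
    · exact reachWithin_symm r2
    · exact reachWithin_symm r3
    · exact Relation.ReflTransGen.refl
  refine ⟨_, ⟨hmemb, by rw [hroot]; exact hparb, ?_, ?_, ?_⟩, hconnT, ?_, ?_⟩
  · intro v hv
    rw [hsupp] at hv
    push_neg at hv
    rw [hpar, if_neg hv.2.1, if_neg hv.2.2]
  · intro v hv hvb
    rw [hroot] at hvb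
    rw [hsupp] at hv
    rcases hv with rfl | rfl | rfl
    · exact absurd rfl hvb
    · exact ⟨b, hmemb, hpara⟩
    · exact ⟨b, hmemb, hparc⟩
  · intro v hv
    rw [hroot]
    rcases (hsupp v).mp hv with rfl | rfl | rfl
    · exact Relation.ReflTransGen.refl
    · exact Relation.ReflTransGen.single hstepa
    · exact Relation.ReflTransGen.single hstepc
  · intro cc hcc w
    have hcc' := hchild cc hcc
    rw [hdesc cc hcc' w, hroot]
    constructor
    · rintro rfl
      rcases hcc' with rfl | rfl
      · exact ⟨hmema, hAB.symm ∘ Eq.symm, Relation.ReflTransGen.refl⟩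
      · exact ⟨hmemc, hBC ∘ Eq.symm, Relation.ReflTransGen.refl⟩
    · rintro ⟨_, _, hr⟩
      exact hreach cc hcc' w hr
  · intro cc hcc
    have hcc' := hchild cc hcc
    have heq : T.subtreeAt cc = chainT [cc] cc := by
      refine RTree.ext' ?_ rfl ?_
      · ext z
        show z ∈ T.descendants cc ↔ z ∈ {x | x ∈ [cc]}
        rw [hdesc cc hcc' z]
        simp
      · funext w
        show (if w = cc then none else if w ∈ T.descendants cc then T.parent w else none)
          = prevOf [cc] w
        rw [show prevOf [cc] w = none from rfl]
        by_cases hw : w = cc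
        · rw [if_pos hw]
        · rw [if_neg hw, if_neg (fun h => hw ((hdesc cc hcc' w).mp h))]
    rw [heq]
    exact single_isSearchTreeRec cc cc

lemma append_eq_append_singleton {α : Type*} {L1 L2 M : List α} {v : α}
    (h : L1 ++ L2 = M ++ [v]) :
    (L2 = [] ∧ L1 = M ++ [v]) ∨ ∃ L2', L2 = L2' ++ [v] ∧ M = L1 ++ L2' := by
  rcases List.eq_nil_or_concat L2 with rfl | ⟨L2', x, rfl⟩
  · exact Or.inl ⟨rfl, by simpa using h⟩
  · right
    rw [List.concat_eq_append, ← List.append_assoc] at h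
    obtain ⟨h3, h4⟩ := List.append_inj' h rfl
    injection h4 with h4
    subst h4
    exact ⟨L2', by rw [List.concat_eq_append], h3.symm⟩

lemma grow {G : SimpleGraph V} [Fintype V] (hG : G.Connected) :
    ∀ (n : ℕ) (r : Finset V), (rᶜ : Finset V).card = n → r.Nonempty → connSet G ↑r →
    ∃ M : List V, M.Nodup ∧ (∀ x : V, x ∈ M ↔ x ∉ r) ∧
      (∀ L1 L2 : List V, M = L1 ++ L2 → connSet G ({z | z ∈ L2} ∪ ↑r)) := by
  intro n
  induction n with
  | zero =>
    intro r hcard hne hconn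
    refine ⟨[], by simp, ?_, ?_⟩
    · intro x
      simp only [List.not_mem_nil, false_iff, not_not]
      have : rᶜ = ∅ := Finset.card_eq_zero.mp hcard
      by_contra hx
      exact absurd (Finset.mem_compl.mpr hx) (by rw [this]; simp)
    · intro L1 L2 h
      have : L2 = [] := by
        rcases List.append_eq_nil_iff.mp h.symm with ⟨_, h2⟩
        exact h2
      subst this
      have : ({z | z ∈ ([] : List V)} ∪ (↑r : Set V)) = ↑r := by simp
      rw [this]
      exact hconn
  | succ n ih =>
    intro r hcard hne hconn
    have hcne : (rᶜ : Finset V).Nonempty := Finset.card_pos.mp (by omega)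
    obtain ⟨w0, hw0⟩ := hcne
    rw [Finset.mem_compl] at hw0
    obtain ⟨u0, hu0⟩ := hne
    have hcross : ∃ u v, u ∈ r ∧ v ∉ r ∧ G.Adj u v := by
      have key : ∀ {pp qq : V}, G.Walk pp qq → pp ∈ r → qq ∉ r →
          ∃ u v, u ∈ r ∧ v ∉ r ∧ G.Adj u v := by
        intro pp qq w
        induction w with
        | nil => intro h1 h2; exact absurd h1 h2
        | @cons x y z hadj w ih2 =>
          intro h1 h2
          by_cases hm : y ∈ r
          · exact ih2 hm h2
          · exact ⟨x, y, h1, hm, hadj⟩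
      obtain ⟨p⟩ := hG.preconnected u0 w0
      exact key p hu0 hw0
    obtain ⟨u, v, hu, hv, huv⟩ := hcross
    have hconn' : connSet G ↑(insert v r) := by
      rw [Finset.coe_insert]
      have hvmem : v ∈ insert v (↑r : Set V) := Set.mem_insert _ _
      have hsub : (↑r : Set V) ⊆ insert v ↑r := Set.subset_insert _ _
      have hvu : reachWithin G (insert v ↑r) v u :=
        Relation.ReflTransGen.single ⟨hvmem, hsub hu, huv.symm⟩
      intro p hp q hq
      rcases Set.mem_insert_iff.mp hp with rfl | hp' <;>
        rcases Set.mem_insert_iff.mp hq with rfl | hq'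
      · exact Relation.ReflTransGen.refl
      · exact Relation.ReflTransGen.trans hvu (reachWithin_mono hsub (hconn u hu q hq'))
      · exact reachWithin_symm
          (Relation.ReflTransGen.trans hvu (reachWithin_mono hsub (hconn u hu p hp')))
      · exact reachWithin_mono hsub (hconn p hp' q hq')
    have hcard' : ((insert v r)ᶜ : Finset V).card = n := by
      rw [Finset.compl_insert, Finset.card_erase_of_mem (Finset.mem_compl.mpr hv), hcard]
      omega
    obtain ⟨M', hnd', hmem', hcn'⟩ := ih (insert v r) hcard' ⟨v, Finset.mem_insert_self v r⟩ hconn'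
    have hvM' : v ∉ M' := fun h => (hmem' v).mp h (Finset.mem_insert_self v r)
    refine ⟨M' ++ [v], ?_, ?_, ?_⟩
    · simp [List.nodup_append, hnd', hvM']; exact fun a ha h => hvM' (h ▸ ha)
    · intro x
      by_cases hx : x = v
      · subst hx; simp [hv]
      · simp only [List.mem_append, List.mem_singleton, hx, or_false]
        rw [hmem' x, Finset.mem_insert]
        tauto
    · intro L1 L2 h
      rcases append_eq_append_singleton h.symm with ⟨rfl, _⟩ | ⟨L2', rfl, hM⟩
      · have : ({z | z ∈ ([] : List V)} ∪ (↑r : Set V)) = ↑r := by simp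
        rw [this]
        exact hconn
      · have hset : ({z | z ∈ L2' ++ [v]} ∪ (↑r : Set V)) = {z | z ∈ L2'} ∪ ↑(insert v r) := by
          ext z
          simp only [Set.mem_union, Set.mem_setOf_eq, List.mem_append, List.mem_singleton,
            Finset.coe_insert, Set.mem_insert_iff, Finset.mem_coe]
          tauto
        rw [hset]
        exact hcn' L1 L2' hM

end C5Aux
namespace C5Aux
variable {V : Type u}

lemma headD_append_cons (M : List V) (x d : V) (l : List V) :
    (M ++ x :: l).headD d = M.headD x := by
  cases M <;> simp

section Rot

variable {G : SimpleGraph V} {M : List V} {a b c : V}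

lemma getLast?_ne (x : V) (hx : x ∉ M) : M.getLast? ≠ some x := by
  intro h
  obtain ⟨hne, rfl⟩ := List.mem_getLast?_eq_getLast (x := x) (by rw [h]; rfl)
  exact hx (List.getLast_mem hne)

lemma headD_ne {x y : V} (hx : x ∉ M) (hxy : x ≠ y) : M.headD y ≠ x := by
  cases M with
  | nil => intro h; exact hxy (by simpa using h.symm)
  | cons m Mt => intro h; rw [List.headD_cons] at h; rw [h] at hx; simp at hx

-- parent values for the five trees
lemma pT1a (haM : a ∉ M) (hAB : a ≠ b) (hAC : a ≠ c) : (chainT (M ++ [a, b, c]) c).parent a = M.getLast? :=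
  prevOf_append_head M a [b, c] haM (by simp [hAB, hAC])

lemma pT1b (hbM : b ∉ M) (hAB : a ≠ b) : (chainT (M ++ [a, b, c]) c).parent b = some a := by
  show prevOf (M ++ a :: [b, c]) b = some a
  rw [prevOf_append_right M [b, c] hbM (Ne.symm hAB)]
  simp [prevOf]

lemma pT1c (hcM : c ∉ M) (hAC : a ≠ c) (hBC : b ≠ c) : (chainT (M ++ [a, b, c]) c).parent c = some b := by
  show prevOf (M ++ a :: [b, c]) c = some b
  rw [prevOf_append_right M [b, c] hcM (Ne.symm hAC)]
  simp [prevOf, Ne.symm hBC]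

lemma pT2a (haM : a ∉ M) (hAB : a ≠ b) (hAC : a ≠ c) : (chainT (M ++ [a, c, b]) b).parent a = M.getLast? :=
  prevOf_append_head M a [c, b] haM (by simp [hAC, hAB])

lemma pT2c (hcM : c ∉ M) (hAC : a ≠ c) : (chainT (M ++ [a, c, b]) b).parent c = some a := by
  show prevOf (M ++ a :: [c, b]) c = some a
  rw [prevOf_append_right M [c, b] hcM (Ne.symm hAC)]
  simp [prevOf]

lemma pT2b (hbM : b ∉ M) (hAB : a ≠ b) (hBC : b ≠ c) : (chainT (M ++ [a, c, b]) b).parent b = some c := by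
  show prevOf (M ++ a :: [c, b]) b = some c
  rw [prevOf_append_right M [c, b] hbM (Ne.symm hAB)]
  simp [prevOf, hBC]

lemma pT3c (hcM : c ∉ M) (hAC : a ≠ c) (hBC : b ≠ c) : (chainT (M ++ [c, a, b]) b).parent c = M.getLast? :=
  prevOf_append_head M c [a, b] hcM (by simp [Ne.symm hAC, Ne.symm hBC])

lemma pT3a (haM : a ∉ M) (hAC : a ≠ c) : (chainT (M ++ [c, a, b]) b).parent a = some c := by
  show prevOf (M ++ c :: [a, b]) a = some c
  rw [prevOf_append_right M [a, b] haM hAC]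
  simp [prevOf]

lemma pT3b (hbM : b ∉ M) (hAB : a ≠ b) (hBC : b ≠ c) : (chainT (M ++ [c, a, b]) b).parent b = some a := by
  show prevOf (M ++ c :: [a, b]) b = some a
  rw [prevOf_append_right M [a, b] hbM hBC]
  simp [prevOf, Ne.symm hAB]

lemma pT4c (hcM : c ∉ M) (hAC : a ≠ c) (hBC : b ≠ c) : (chainT (M ++ [c, b, a]) a).parent c = M.getLast? :=
  prevOf_append_head M c [b, a] hcM (by simp [Ne.symm hBC, Ne.symm hAC])

lemma pT4b (hbM : b ∉ M) (hBC : b ≠ c) : (chainT (M ++ [c, b, a]) a).parent b = some c := by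
  show prevOf (M ++ c :: [b, a]) b = some c
  rw [prevOf_append_right M [b, a] hbM hBC]
  simp [prevOf]

lemma pT4a (haM : a ∉ M) (hAB : a ≠ b) (hAC : a ≠ c) : (chainT (M ++ [c, b, a]) a).parent a = some b := by
  show prevOf (M ++ c :: [b, a]) a = some b
  rw [prevOf_append_right M [b, a] haM hAC]
  simp [prevOf, hAB]

lemma pT5a : (starT M a b c).parent a = some b := by
  show (if a = a then some b else _) = some b
  rw [if_pos rfl]

lemma pT5c (hAC : a ≠ c) : (starT M a b c).parent c = some b := by
  show (if c = a then some b else if c = c then some b else _) = some b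
  rw [if_neg (Ne.symm hAC), if_pos rfl]

lemma pT5b (hbM : b ∉ M) (hAB : a ≠ b) (hBC : b ≠ c) : (starT M a b c).parent b = M.getLast? := by
  show (if b = a then some b else if b = c then some b else prevOf (M ++ [b]) b) = _
  rw [if_neg (Ne.symm hAB), if_neg hBC]
  exact prevOf_append_head M b [] hbM (by simp)

lemma pT5other (w : V) (hwa : w ≠ a) (hwc : w ≠ c) :
    (starT M a b c).parent w = prevOf (M ++ [b]) w := by
  show (if w = a then some b else if w = c then some b else prevOf (M ++ [b]) w) = _
  rw [if_neg hwa, if_neg hwc]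

-- stem agreement
lemma stem_eq_chains {l l' : List V} {x x' : V} (hxl : ∀ z, z ∈ x :: l → z = a ∨ z = b ∨ z = c)
    (hxl' : ∀ z, z ∈ x' :: l' → z = a ∨ z = b ∨ z = c)
    (w : V) (hwa : w ≠ a) (hwb : w ≠ b) (hwc : w ≠ c) :
    prevOf (M ++ x :: l) w = prevOf (M ++ x' :: l') w := by
  have hw1 : w ∉ x :: l := fun h => by rcases hxl w h with h | h | h <;> tauto
  have hw2 : w ∉ x' :: l' := fun h => by rcases hxl' w h with h | h | h <;> tauto
  refine prevOf_append_congr M (by simp) (by simp) ?_ ?_ ?_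
  · rw [List.head?_cons]
    intro h; injection h with h; exact hw1 (h ▸ (List.mem_cons_self : x ∈ x :: l))
  · rw [List.head?_cons]
    intro h; injection h with h; exact hw2 (h ▸ (List.mem_cons_self : x' ∈ x' :: l'))
  · rw [prevOf_not_mem _ _ hw1, prevOf_not_mem _ _ hw2]

-- no-child-of-last lemmas
lemma nochild_last {N : List V} {x : V} (hxN : x ∉ N) (w : V) :
    prevOf (N ++ [x]) w ≠ some x := by
  intro h
  have := prevOf_mem_dropLast h
  rw [show N ++ [x] = (N ++ [x] : List V) from rfl, List.dropLast_concat] at this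
  exact hxN this

lemma nd3 (hMnd : M.Nodup) (x y z : V) (hx : x ∉ M) (hy : y ∉ M) (hz : z ∉ M)
    (hxy : x ≠ y) (hxz : x ≠ z) (hyz : y ≠ z) : (M ++ [x, y, z]).Nodup := by
  rw [List.nodup_append]
  refine ⟨hMnd, by simp [hxy, hxz, hyz], ?_⟩
  intro t ht _ hmem heq; subst heq
  simp only [List.mem_cons, List.mem_singleton, List.not_mem_nil, or_false] at hmem
  rcases hmem with rfl | rfl | rfl
  · exact hx ht
  · exact hy ht
  · exact hz ht

end Rot
end C5Aux
namespace C5Aux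
variable {V : Type u}

section Rot2
variable {G : SimpleGraph V} {M : List V} {a b c : V}

lemma rot12 (haM : a ∉ M) (hbM : b ∉ M) (hcM : c ∉ M)
    (hAB : a ≠ b) (hAC : a ≠ c) (hBC : b ≠ c) :
    chainT (M ++ [a, c, b]) b = rotate G (chainT (M ++ [a, b, c]) c) b c := by
  refine RTree.ext' ?_ ?_ ?_
  · show {z | z ∈ M ++ [a, c, b]} = {z | z ∈ M ++ [a, b, c]}
    ext z
    simp only [Set.mem_setOf_eq, List.mem_append, List.mem_cons, List.not_mem_nil, or_false]
    tauto
  · show (M ++ [a, c, b]).headD b =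
      if (chainT (M ++ [a, b, c]) c).root = b then c else (chainT (M ++ [a, b, c]) c).root
    have h1 : (chainT (M ++ [a, b, c]) c).root = M.headD a := headD_append_cons M a c [b, c]
    rw [h1, if_neg (headD_ne hbM (Ne.symm hAB)), headD_append_cons]
  · funext w
    show (chainT (M ++ [a, c, b]) b).parent w =
      if w = c then (chainT (M ++ [a, b, c]) c).parent b
      else if w = b then some c
      else if (chainT (M ++ [a, b, c]) c).parent w = some c then
        (if ∃ z ∈ (chainT (M ++ [a, b, c]) c).descendants w, G.Adj b z then some b else some c)
      else (chainT (M ++ [a, b, c]) c).parent w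
    by_cases hwc : w = c
    · rw [if_pos hwc, pT1b hbM hAB, hwc]
      exact pT2c hcM hAC
    · rw [if_neg hwc]
      by_cases hwb : w = b
      · rw [if_pos hwb, hwb]
        exact pT2b hbM hAB hBC
      · rw [if_neg hwb]
        by_cases hwa : w = a
        · rw [if_neg (by rw [hwa, pT1a haM hAB hAC]; exact getLast?_ne c hcM), hwa,
            pT1a haM hAB hAC]
          exact pT2a haM hAB hAC
        · rw [if_neg (show ¬ (chainT (M ++ [a, b, c]) c).parent w = some c from
            fun h => nochild_last (N := M ++ [a, b]) (x := c)
            (by simp [hcM, Ne.symm hAC, Ne.symm hBC]) w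
            (show prevOf ((M ++ [a, b]) ++ [c]) w = some c by
              rw [List.append_assoc]; exact h))]
          exact stem_eq_chains (x := a) (l := [c, b]) (x' := a) (l' := [b, c])
            (by intro z hz; simp at hz; tauto) (by intro z hz; simp at hz; tauto) w hwa hwb hwc

lemma rot23 (hMnd : M.Nodup) (haM : a ∉ M) (hbM : b ∉ M) (hcM : c ∉ M)
    (hAB : a ≠ b) (hAC : a ≠ c) (hBC : b ≠ c) (hab : G.Adj a b) :
    chainT (M ++ [c, a, b]) b = rotate G (chainT (M ++ [a, c, b]) b) a c := by
  refine RTree.ext' ?_ ?_ ?_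
  · show {z | z ∈ M ++ [c, a, b]} = {z | z ∈ M ++ [a, c, b]}
    ext z
    simp only [Set.mem_setOf_eq, List.mem_append, List.mem_cons, List.not_mem_nil, or_false]
    tauto
  · show (M ++ [c, a, b]).headD b =
      if (chainT (M ++ [a, c, b]) b).root = a then c else (chainT (M ++ [a, c, b]) b).root
    have h1 : (chainT (M ++ [a, c, b]) b).root = M.headD a := headD_append_cons M a b [c, b]
    rw [h1, headD_append_cons]
    cases M with
    | nil => simp
    | cons m Mt =>
      simp only [List.headD_cons]
      simp only [show ¬ m = a from fun h => haM (by rw [← h]; exact (List.mem_cons_self : m ∈ m :: Mt)),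
        ↓reduceIte]
  · funext w
    show (chainT (M ++ [c, a, b]) b).parent w =
      if w = c then (chainT (M ++ [a, c, b]) b).parent a
      else if w = a then some c
      else if (chainT (M ++ [a, c, b]) b).parent w = some c then
        (if ∃ z ∈ (chainT (M ++ [a, c, b]) b).descendants w, G.Adj a z then some a else some c)
      else (chainT (M ++ [a, c, b]) b).parent w
    by_cases hwc : w = c
    · rw [if_pos hwc, pT2a haM hAB hAC, hwc]
      exact pT3c hcM hAC hBC
    · rw [if_neg hwc]
      by_cases hwa : w = a
      · rw [if_pos hwa, hwa]
        exact pT3a haM hAC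
      · rw [if_neg hwa]
        by_cases hwb : w = b
        · subst hwb
          rw [if_pos (pT2b hbM hAB hBC),
            if_pos ⟨w, ⟨by simp [chainT], Relation.ReflTransGen.refl⟩, hab⟩]
          exact pT3b hbM hAB hBC
        · rw [if_neg (show ¬ (chainT (M ++ [a, c, b]) b).parent w = some c from
            fun h => hwb (prevOf_inj
            (nd3 hMnd a c b haM hcM hbM hAC hAB (Ne.symm hBC)) h (pT2b hbM hAB hBC)))]
          exact stem_eq_chains (x := c) (l := [a, b]) (x' := a) (l' := [c, b])
            (by intro z hz; simp at hz; tauto) (by intro z hz; simp at hz; tauto) w hwa hwb hwc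

lemma rot34 (haM : a ∉ M) (hbM : b ∉ M) (hcM : c ∉ M)
    (hAB : a ≠ b) (hAC : a ≠ c) (hBC : b ≠ c) :
    chainT (M ++ [c, b, a]) a = rotate G (chainT (M ++ [c, a, b]) b) a b := by
  refine RTree.ext' ?_ ?_ ?_
  · show {z | z ∈ M ++ [c, b, a]} = {z | z ∈ M ++ [c, a, b]}
    ext z
    simp only [Set.mem_setOf_eq, List.mem_append, List.mem_cons, List.not_mem_nil, or_false]
    tauto
  · show (M ++ [c, b, a]).headD a =
      if (chainT (M ++ [c, a, b]) b).root = a then b else (chainT (M ++ [c, a, b]) b).root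
    have h1 : (chainT (M ++ [c, a, b]) b).root = M.headD c := headD_append_cons M c b [a, b]
    rw [h1, if_neg (headD_ne haM hAC), headD_append_cons]
  · funext w
    show (chainT (M ++ [c, b, a]) a).parent w =
      if w = b then (chainT (M ++ [c, a, b]) b).parent a
      else if w = a then some b
      else if (chainT (M ++ [c, a, b]) b).parent w = some b then
        (if ∃ z ∈ (chainT (M ++ [c, a, b]) b).descendants w, G.Adj a z then some a else some b)
      else (chainT (M ++ [c, a, b]) b).parent w
    by_cases hwb : w = b
    · rw [if_pos hwb, pT3a haM hAC, hwb]
      exact pT4b hbM hBC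
    · rw [if_neg hwb]
      by_cases hwa : w = a
      · rw [if_pos hwa, hwa]
        exact pT4a haM hAB hAC
      · rw [if_neg hwa]
        by_cases hwc : w = c
        · rw [if_neg (by rw [hwc, pT3c hcM hAC hBC]; exact getLast?_ne b hbM), hwc,
            pT3c hcM hAC hBC]
          exact pT4c hcM hAC hBC
        · rw [if_neg (show ¬ (chainT (M ++ [c, a, b]) b).parent w = some b from
            fun h => nochild_last (N := M ++ [c, a]) (x := b)
            (by simp [hbM, hBC, Ne.symm hAB]) w
            (show prevOf ((M ++ [c, a]) ++ [b]) w = some b by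
              rw [List.append_assoc]; exact h))]
          exact stem_eq_chains (x := c) (l := [b, a]) (x' := c) (l' := [a, b])
            (by intro z hz; simp at hz; tauto) (by intro z hz; simp at hz; tauto) w hwa hwb hwc

lemma rot45 (hMnd : M.Nodup) (haM : a ∉ M) (hbM : b ∉ M) (hcM : c ∉ M)
    (hAB : a ≠ b) (hAC : a ≠ c) (hBC : b ≠ c) (hac : ¬ G.Adj a c) :
    starT M a b c = rotate G (chainT (M ++ [c, b, a]) a) c b := by
  have hdesc4 : ∀ z, z ∈ (chainT (M ++ [c, b, a]) a).descendants a → z = a := by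
    rintro z ⟨_, hanc⟩
    rcases Relation.ReflTransGen.cases_tail hanc with h | ⟨m, _, hm⟩
    · exact h.symm
    · exact absurd
        (show prevOf ((M ++ [c, b]) ++ [a]) m = some a by rw [List.append_assoc]; exact hm)
        (nochild_last (N := M ++ [c, b]) (x := a) (by simp [haM, hAC, hAB]) m)
  refine RTree.ext' ?_ ?_ ?_
  · show {z | z ∈ M ++ [b, a, c]} = {z | z ∈ M ++ [c, b, a]}
    ext z
    simp only [Set.mem_setOf_eq, List.mem_append, List.mem_cons, List.not_mem_nil, or_false]
    tauto
  · show (M ++ [b]).headD b =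
      if (chainT (M ++ [c, b, a]) a).root = c then b else (chainT (M ++ [c, b, a]) a).root
    have h1 : (chainT (M ++ [c, b, a]) a).root = M.headD c := headD_append_cons M c a [b, a]
    rw [h1]
    cases M with
    | nil => simp
    | cons m Mt =>
      simp only [List.cons_append, List.headD_cons]
      simp only [show ¬ m = c from fun h => hcM (by rw [← h]; exact (List.mem_cons_self : m ∈ m :: Mt)),
        ↓reduceIte]
  · funext w
    show (starT M a b c).parent w =
      if w = b then (chainT (M ++ [c, b, a]) a).parent c
      else if w = c then some b
      else if (chainT (M ++ [c, b, a]) a).parent w = some b then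
        (if ∃ z ∈ (chainT (M ++ [c, b, a]) a).descendants w, G.Adj c z then some c else some b)
      else (chainT (M ++ [c, b, a]) a).parent w
    by_cases hwb : w = b
    · rw [if_pos hwb, pT4c hcM hAC hBC, hwb]
      exact pT5b hbM hAB hBC
    · rw [if_neg hwb]
      by_cases hwc : w = c
      · rw [if_pos hwc, hwc]
        exact pT5c hAC
      · rw [if_neg hwc]
        by_cases hwa : w = a
        · subst hwa
          rw [if_pos (pT4a haM hAB hAC)]
          rw [if_neg (by
            rintro ⟨z, hz, hadj⟩
            rw [hdesc4 z hz] at hadj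
            exact hac hadj.symm)]
          exact pT5a
        · rw [if_neg (show ¬ (chainT (M ++ [c, b, a]) a).parent w = some b from
            fun h => hwa (prevOf_inj
            (nd3 hMnd c b a hcM hbM haM (Ne.symm hBC) (Ne.symm hAC) (Ne.symm hAB)) h
            (pT4a haM hAB hAC)))]
          rw [pT5other w hwa hwc]
          refine prevOf_append_congr M (by simp) (by simp) ?_ ?_ ?_
          · simp only [List.head?_cons, ne_eq, Option.some.injEq]
            exact fun h => hwb h
          · simp only [List.head?_cons, ne_eq, Option.some.injEq]
            exact fun h => hwc h
          · rw [prevOf_not_mem _ _ (by simp [hwb]),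
              prevOf_not_mem _ _ (by simp [hwc, hwb, hwa])]

lemma rot51 (haM : a ∉ M) (hbM : b ∉ M) (hcM : c ∉ M)
    (hAB : a ≠ b) (hAC : a ≠ c) (hBC : b ≠ c) :
    chainT (M ++ [a, b, c]) c = rotate G (starT M a b c) b a := by
  refine RTree.ext' ?_ ?_ ?_
  · show {z | z ∈ M ++ [a, b, c]} = {z | z ∈ M ++ [b, a, c]}
    ext z
    simp only [Set.mem_setOf_eq, List.mem_append, List.mem_cons, List.not_mem_nil, or_false]
    tauto
  · show (M ++ [a, b, c]).headD c =
      if (starT M a b c).root = b then a else (starT M a b c).root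
    have h1 : (starT M a b c).root = M.headD b := by
      show (M ++ [b]).headD b = M.headD b
      cases M <;> simp
    rw [h1, headD_append_cons]
    cases M with
    | nil => simp
    | cons m Mt =>
      simp only [List.headD_cons]
      simp only [show ¬ m = b from fun h => hbM (by rw [← h]; exact (List.mem_cons_self : m ∈ m :: Mt)),
        ↓reduceIte]
  · funext w
    show (chainT (M ++ [a, b, c]) c).parent w =
      if w = a then (starT M a b c).parent b
      else if w = b then some a
      else if (starT M a b c).parent w = some a then
        (if ∃ z ∈ (starT M a b c).descendants w, G.Adj b z then some b else some a)
      else (starT M a b c).parent w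
    by_cases hwa : w = a
    · rw [if_pos hwa, pT5b hbM hAB hBC, hwa]
      exact pT1a haM hAB hAC
    · rw [if_neg hwa]
      by_cases hwb : w = b
      · rw [if_pos hwb, hwb]
        exact pT1b hbM hAB
      · rw [if_neg hwb]
        by_cases hwc : w = c
        · rw [if_neg (by rw [hwc, pT5c hAC]; simp [Ne.symm hAB]), hwc, pT5c hAC]
          exact pT1c hcM hAC hBC
        · have hcond : prevOf (M ++ [b]) w ≠ some a := by
            intro h
            rcases List.mem_append.mp (prevOf_mem h) with h' | h'
            · exact haM h'
            · simp at h'; exact hAB h'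
          rw [pT5other w hwa hwc, if_neg hcond]
          refine prevOf_append_congr M (by simp) (by simp) ?_ ?_ ?_
          · simp only [List.head?_cons, ne_eq, Option.some.injEq]
            exact fun h => hwa h
          · simp only [List.head?_cons, ne_eq, Option.some.injEq]
            exact fun h => hwb h
          · rw [prevOf_not_mem _ _ (by simp [hwa, hwb, hwc]),
              prevOf_not_mem _ _ (by simp [hwb])]

end Rot2
end C5Aux
namespace C5Aux
variable {V : Type u}

lemma connSet_congr {G : SimpleGraph V} {s t : Set V} (h : s = t) (hc : connSet G s) :
    connSet G t := h ▸ hc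

lemma conn_single {G : SimpleGraph V} {s : Set V} {x : V} (h : ∀ v, v ∈ s ↔ v = x) :
    connSet G s := by
  intro p hp q hq
  rw [h] at hp hq
  rw [hp, hq]
  exact Relation.ReflTransGen.refl

lemma conn_pair {G : SimpleGraph V} {s : Set V} {x y : V} (hxy : G.Adj x y)
    (h : ∀ v, v ∈ s ↔ v = x ∨ v = y) : connSet G s := by
  have hx : x ∈ s := (h x).mpr (Or.inl rfl)
  have hy : y ∈ s := (h y).mpr (Or.inr rfl)
  have r1 : reachWithin G s x y := Relation.ReflTransGen.single ⟨hx, hy, hxy⟩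
  intro p hp q hq
  rw [h] at hp hq
  rcases hp with rfl | rfl <;> rcases hq with rfl | rfl
  · exact Relation.ReflTransGen.refl
  · exact r1
  · exact reachWithin_symm r1
  · exact Relation.ReflTransGen.refl

lemma conn_triple {G : SimpleGraph V} {s : Set V} {a b c : V}
    (hab : G.Adj a b) (hbc : G.Adj b c)
    (h : ∀ v, v ∈ s ↔ v = a ∨ v = b ∨ v = c) : connSet G s := by
  have ha : a ∈ s := (h a).mpr (Or.inl rfl)
  have hb : b ∈ s := (h b).mpr (Or.inr (Or.inl rfl))
  have hc : c ∈ s := (h c).mpr (Or.inr (Or.inr rfl))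
  have r1 : reachWithin G s a b := Relation.ReflTransGen.single ⟨ha, hb, hab⟩
  have r2 : reachWithin G s b c := Relation.ReflTransGen.single ⟨hb, hc, hbc⟩
  have r3 : reachWithin G s a c := Relation.ReflTransGen.trans r1 r2
  intro p hp q hq
  rw [h] at hp hq
  rcases hp with rfl | rfl | rfl <;> rcases hq with rfl | rfl | rfl
  · exact Relation.ReflTransGen.refl
  · exact r1
  · exact r3
  · exact reachWithin_symm r1
  · exact Relation.ReflTransGen.refl
  · exact r2
  · exact reachWithin_symm r3
  · exact reachWithin_symm r2
  · exact Relation.ReflTransGen.refl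

lemma exists_path3 {G : SimpleGraph V} (hG : G.Connected) (hnc : G ≠ ⊤) :
    ∃ a b c, G.Adj a b ∧ G.Adj b c ∧ ¬ G.Adj a c ∧ a ≠ c := by
  by_contra hcon
  push_neg at hcon
  have key : ∀ x y : V, G.Reachable x y → x ≠ y → G.Adj x y := by
    intro x y hr
    obtain ⟨p⟩ := hr
    induction p with
    | nil => intro h; exact absurd rfl h
    | @cons x m y hadj p ih =>
      intro hxy
      by_cases hmy : m = y
      · exact hmy ▸ hadj
      · have hmy' : G.Adj m y := ih hmy
        by_cases hAdj : G.Adj x y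
        · exact hAdj
        · exact absurd (hcon x m y hadj hmy' hAdj) hxy
  apply hnc
  ext x y
  simp only [SimpleGraph.top_adj]
  exact ⟨fun h => h.ne, fun h => key x y (hG.preconnected x y) h⟩

lemma chainFull_rec {G : SimpleGraph V} {M : List V} {x y z : V}
    (hMnd : M.Nodup) (hxM : x ∉ M) (hyM : y ∉ M) (hzM : z ∉ M)
    (hxy : x ≠ y) (hxz : x ≠ z) (hyz : y ≠ z)
    (hyzAdj : G.Adj y z)
    (hconn3 : connSet G ({v | v = x ∨ v = y ∨ v = z} : Set V))
    (hgrow : ∀ L1 L2 : List V, M = L1 ++ L2 →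
      connSet G ({v | v ∈ L2} ∪ {v | v = x ∨ v = y ∨ v = z})) :
    IsSearchTreeRec G (chainT (M ++ [x, y, z]) z) := by
  rw [show M ++ [x, y, z] = (M ++ [x, y]) ++ [z] by simp, chainT_foldr]
  refine foldr_isSearchTreeRec (single_isSearchTreeRec z z) (M ++ [x, y]) ?_ ?_ ?_
  · rw [List.nodup_append]
    refine ⟨hMnd, by simp [hxy], ?_⟩
    intro t ht _ hmem heq; subst heq
    simp only [List.mem_cons, List.not_mem_nil, or_false, List.mem_singleton] at hmem
    rcases hmem with rfl | rfl
    · exact hxM ht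
    · exact hyM ht
  · intro m hm hsupp
    have hmz : m = z := by simpa [chainT] using hsupp
    subst hmz
    rcases List.mem_append.mp hm with h | h
    · exact hzM h
    · simp at h
      rcases h with h | h
      · exact hxz h.symm
      · exact hyz h.symm
  · intro L1 L2 hL
    have hL' : L1 ++ L2 = (M ++ [x]) ++ [y] := by rw [← hL]; simp
    have hsupp : (chainT [z] z).supp = {v | v = z} := by
      ext v; simp [chainT]
    rw [hsupp]
    rcases append_eq_append_singleton hL' with ⟨rfl, _⟩ | ⟨L2'', rfl, hM2⟩
    · exact conn_single (x := z) (by intro v; simp)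
    · rcases append_eq_append_singleton hM2.symm with ⟨rfl, _⟩ | ⟨L2', rfl, hM1⟩
      · exact conn_pair hyzAdj (by intro v; simp; tauto)
      · refine connSet_congr ?_ (hgrow L1 L2' hM1)
        ext v
        simp only [Set.mem_union, Set.mem_setOf_eq, List.mem_append, List.mem_cons,
          List.mem_singleton, List.not_mem_nil, or_false]
        tauto

lemma starFull_rec {G : SimpleGraph V} {M : List V} {a b c : V}
    (hMnd : M.Nodup) (haM : a ∉ M) (hbM : b ∉ M) (hcM : c ∉ M)
    (hab : G.Adj a b) (hbc : G.Adj b c) (hac : ¬ G.Adj a c) (hAC : a ≠ c)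
    (hgrow : ∀ L1 L2 : List V, M = L1 ++ L2 →
      connSet G ({v | v ∈ L2} ∪ {v | v = a ∨ v = b ∨ v = c})) :
    IsSearchTreeRec G (starT M a b c) := by
  rw [starT_foldr M haM hcM hab.ne (Ne.symm hbc.ne)]
  refine foldr_isSearchTreeRec (starBase_isSearchTreeRec hab hbc hac hAC) M hMnd ?_ ?_
  · intro m hm hsupp
    have : m = b ∨ m = a ∨ m = c := by simpa [starT] using hsupp
    rcases this with rfl | rfl | rfl
    · exact hbM hm
    · exact haM hm
    · exact hcM hm
  · intro L1 L2 hL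
    refine connSet_congr ?_ (hgrow L1 L2 hL)
    ext v
    simp only [Set.mem_union, Set.mem_setOf_eq, starT, List.mem_append, List.mem_cons,
      List.mem_singleton, List.not_mem_nil, or_false, List.nil_append]
    tauto

end C5Aux
open C5Aux in
/-- if `G` is connected, not complete, with at least 3 vertices, then
`R(G)` contains a 5-cycle; consequently `χ(R(G)) ≥ 3`. -/
theorem rotationGraph_noncomplete_has_C5 {V : Type u} [Fintype V] (G : SimpleGraph V)
    (hG : G.Connected) (h3 : 3 ≤ Fintype.card V) (hnc : G ≠ ⊤) :
    (∃ c : Fin 5 → {T : RTree V // IsSearchTreeOn G Set.univ T},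
      Function.Injective c ∧
        ∀ i : Fin 5, (rotationGraphOn G Set.univ).Adj (c i) (c (i + 1)))
    ∧ 3 ≤ (rotationGraphOn G Set.univ).chromaticNumber := by
  classical
  obtain ⟨a, b, c, hab, hbc, hac, hAC⟩ := exists_path3 hG hnc
  have hAB : a ≠ b := hab.ne
  have hBC : b ≠ c := hbc.ne
  have hconnr : connSet G ↑({a, b, c} : Finset V) :=
    conn_triple hab hbc (by intro v; simp)
  obtain ⟨M, hMnd, hMcov, hMconn⟩ :=
    grow hG ((({a, b, c} : Finset V))ᶜ).card {a, b, c} rfl ⟨a, by simp⟩ hconnr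
  have haM : a ∉ M := fun h => (hMcov a).mp h (by simp)
  have hbM : b ∉ M := fun h => (hMcov b).mp h (by simp)
  have hcM : c ∉ M := fun h => (hMcov c).mp h (by simp)
  have hgrow : ∀ L1 L2 : List V, M = L1 ++ L2 →
      connSet G ({v | v ∈ L2} ∪ {v | v = a ∨ v = b ∨ v = c}) := by
    intro L1 L2 h
    refine connSet_congr ?_ (hMconn L1 L2 h)
    ext v
    simp only [Set.mem_union, Set.mem_setOf_eq, Finset.coe_insert, Set.mem_insert_iff,
      Finset.coe_singleton, Finset.mem_coe, Finset.mem_singleton, Finset.mem_insert]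
    tauto
  have huniv : ∀ x : V, x ∈ M ∨ (x = a ∨ x = b ∨ x = c) := by
    intro x
    by_cases h : x = a ∨ x = b ∨ x = c
    · exact Or.inr h
    · exact Or.inl ((hMcov x).mpr (by simp; tauto))
  -- the five search trees
  have hgrow2 : ∀ L1 L2 : List V, M = L1 ++ L2 →
      connSet G ({v | v ∈ L2} ∪ {v | v = a ∨ v = c ∨ v = b}) := by
    intro L1 L2 h
    refine connSet_congr ?_ (hgrow L1 L2 h)
    ext v
    simp only [Set.mem_union, Set.mem_setOf_eq]
    tauto
  have hgrow3 : ∀ L1 L2 : List V, M = L1 ++ L2 →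
      connSet G ({v | v ∈ L2} ∪ {v | v = c ∨ v = a ∨ v = b}) := by
    intro L1 L2 h
    refine connSet_congr ?_ (hgrow L1 L2 h)
    ext v
    simp only [Set.mem_union, Set.mem_setOf_eq]
    tauto
  have hgrow4 : ∀ L1 L2 : List V, M = L1 ++ L2 →
      connSet G ({v | v ∈ L2} ∪ {v | v = c ∨ v = b ∨ v = a}) := by
    intro L1 L2 h
    refine connSet_congr ?_ (hgrow L1 L2 h)
    ext v
    simp only [Set.mem_union, Set.mem_setOf_eq]
    tauto
  have conn2 : connSet G ({v | v = a ∨ v = c ∨ v = b} : Set V) :=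
    conn_triple hab hbc (fun v => by simp only [Set.mem_setOf_eq]; tauto)
  have conn3 : connSet G ({v | v = c ∨ v = a ∨ v = b} : Set V) :=
    conn_triple hab hbc (fun v => by simp only [Set.mem_setOf_eq]; tauto)
  have conn4 : connSet G ({v | v = c ∨ v = b ∨ v = a} : Set V) :=
    conn_triple hab hbc (fun v => by simp only [Set.mem_setOf_eq]; tauto)
  have hst1 : IsSearchTreeOn G Set.univ (chainT (M ++ [a, b, c]) c) := by
    constructor
    · rw [Set.eq_univ_iff_forall]
      intro x
      show x ∈ {z | z ∈ M ++ [a, b, c]}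
      simp only [Set.mem_setOf_eq, List.mem_append, List.mem_cons, List.not_mem_nil, or_false]
      exact huniv x
    · exact chainFull_rec hMnd haM hbM hcM hAB hAC hBC hbc
        (conn_triple hab hbc (fun v => by simp only [Set.mem_setOf_eq])) hgrow
  have hst2 : IsSearchTreeOn G Set.univ (chainT (M ++ [a, c, b]) b) := by
    constructor
    · rw [Set.eq_univ_iff_forall]
      intro x
      show x ∈ {z | z ∈ M ++ [a, c, b]}
      simp only [Set.mem_setOf_eq, List.mem_append, List.mem_cons, List.not_mem_nil, or_false]
      rcases huniv x with h | h
      · exact Or.inl h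
      · exact Or.inr (by tauto)
    · exact chainFull_rec hMnd haM hcM hbM hAC hAB (Ne.symm hBC) hbc.symm conn2 hgrow2
  have hst3 : IsSearchTreeOn G Set.univ (chainT (M ++ [c, a, b]) b) := by
    constructor
    · rw [Set.eq_univ_iff_forall]
      intro x
      show x ∈ {z | z ∈ M ++ [c, a, b]}
      simp only [Set.mem_setOf_eq, List.mem_append, List.mem_cons, List.not_mem_nil, or_false]
      rcases huniv x with h | h
      · exact Or.inl h
      · exact Or.inr (by tauto)
    · exact chainFull_rec hMnd hcM haM hbM (Ne.symm hAC) (Ne.symm hBC) hAB hab conn3 hgrow3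
  have hst4 : IsSearchTreeOn G Set.univ (chainT (M ++ [c, b, a]) a) := by
    constructor
    · rw [Set.eq_univ_iff_forall]
      intro x
      show x ∈ {z | z ∈ M ++ [c, b, a]}
      simp only [Set.mem_setOf_eq, List.mem_append, List.mem_cons, List.not_mem_nil, or_false]
      rcases huniv x with h | h
      · exact Or.inl h
      · exact Or.inr (by tauto)
    · exact chainFull_rec hMnd hcM hbM haM (Ne.symm hBC) (Ne.symm hAC) (Ne.symm hAB) hab.symm conn4 hgrow4
  have hst5 : IsSearchTreeOn G Set.univ (starT M a b c) := by
    constructor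
    · rw [Set.eq_univ_iff_forall]
      intro x
      show x ∈ {z | z ∈ M ++ [b, a, c]}
      simp only [Set.mem_setOf_eq, List.mem_append, List.mem_cons, List.not_mem_nil, or_false]
      rcases huniv x with h | h
      · exact Or.inl h
      · exact Or.inr (by tauto)
    · exact starFull_rec hMnd haM hbM hcM hab hbc hac hAC hgrow
  -- distinctness
  have hne12 : chainT (M ++ [a, b, c]) c ≠ chainT (M ++ [a, c, b]) b := by
    intro h
    have h2 := congrFun (congrArg RTree.parent h) b
    rw [pT1b hbM hAB, pT2b hbM hAB hBC] at h2
    injection h2 with h2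
    exact hAC h2
  have hne13 : chainT (M ++ [a, b, c]) c ≠ chainT (M ++ [c, a, b]) b := by
    intro h
    have h2 := congrFun (congrArg RTree.parent h) a
    rw [pT1a haM hAB hAC, pT3a haM hAC] at h2
    exact getLast?_ne c hcM h2
  have hne14 : chainT (M ++ [a, b, c]) c ≠ chainT (M ++ [c, b, a]) a := by
    intro h
    have h2 := congrFun (congrArg RTree.parent h) a
    rw [pT1a haM hAB hAC, pT4a haM hAB hAC] at h2
    exact getLast?_ne b hbM h2
  have hne15 : chainT (M ++ [a, b, c]) c ≠ starT M a b c := by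
    intro h
    have h2 := congrFun (congrArg RTree.parent h) b
    rw [pT1b hbM hAB, pT5b hbM hAB hBC] at h2
    exact getLast?_ne a haM h2.symm
  have hne23 : chainT (M ++ [a, c, b]) b ≠ chainT (M ++ [c, a, b]) b := by
    intro h
    have h2 := congrFun (congrArg RTree.parent h) a
    rw [pT2a haM hAB hAC, pT3a haM hAC] at h2
    exact getLast?_ne c hcM h2
  have hne24 : chainT (M ++ [a, c, b]) b ≠ chainT (M ++ [c, b, a]) a := by
    intro h
    have h2 := congrFun (congrArg RTree.parent h) a
    rw [pT2a haM hAB hAC, pT4a haM hAB hAC] at h2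
    exact getLast?_ne b hbM h2
  have hne25 : chainT (M ++ [a, c, b]) b ≠ starT M a b c := by
    intro h
    have h2 := congrFun (congrArg RTree.parent h) b
    rw [pT2b hbM hAB hBC, pT5b hbM hAB hBC] at h2
    exact getLast?_ne c hcM h2.symm
  have hne34 : chainT (M ++ [c, a, b]) b ≠ chainT (M ++ [c, b, a]) a := by
    intro h
    have h2 := congrFun (congrArg RTree.parent h) a
    rw [pT3a haM hAC, pT4a haM hAB hAC] at h2
    injection h2 with h2
    exact hBC h2.symm
  have hne35 : chainT (M ++ [c, a, b]) b ≠ starT M a b c := by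
    intro h
    have h2 := congrFun (congrArg RTree.parent h) b
    rw [pT3b hbM hAB hBC, pT5b hbM hAB hBC] at h2
    exact getLast?_ne a haM h2.symm
  have hne45 : chainT (M ++ [c, b, a]) a ≠ starT M a b c := by
    intro h
    have h2 := congrFun (congrArg RTree.parent h) b
    rw [pT4b hbM hBC, pT5b hbM hAB hBC] at h2
    exact getLast?_ne c hcM h2.symm
  -- adjacency
  have hadj12 : rotAdj G (chainT (M ++ [a, b, c]) c) (chainT (M ++ [a, c, b]) b) :=
    ⟨hne12, Or.inl ⟨b, c, pT1c hcM hAC hBC, rot12 haM hbM hcM hAB hAC hBC⟩⟩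
  have hadj23 : rotAdj G (chainT (M ++ [a, c, b]) b) (chainT (M ++ [c, a, b]) b) :=
    ⟨hne23, Or.inl ⟨a, c, pT2c hcM hAC, rot23 hMnd haM hbM hcM hAB hAC hBC hab⟩⟩
  have hadj34 : rotAdj G (chainT (M ++ [c, a, b]) b) (chainT (M ++ [c, b, a]) a) :=
    ⟨hne34, Or.inl ⟨a, b, pT3b hbM hAB hBC, rot34 haM hbM hcM hAB hAC hBC⟩⟩
  have hadj45 : rotAdj G (chainT (M ++ [c, b, a]) a) (starT M a b c) :=
    ⟨hne45, Or.inl ⟨c, b, pT4b hbM hBC, rot45 hMnd haM hbM hcM hAB hAC hBC hac⟩⟩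
  have hadj51 : rotAdj G (starT M a b c) (chainT (M ++ [a, b, c]) c) :=
    ⟨(Ne.symm hne15), Or.inl ⟨b, a, pT5a, rot51 haM hbM hcM hAB hAC hBC⟩⟩
  -- the cycle
  let cy : Fin 5 → {T : RTree V // IsSearchTreeOn G Set.univ T} :=
    ![⟨_, hst1⟩, ⟨_, hst2⟩, ⟨_, hst3⟩, ⟨_, hst4⟩, ⟨_, hst5⟩]
  have hcyc : ∀ i : Fin 5, (rotationGraphOn G Set.univ).Adj (cy i) (cy (i + 1)) := by
    intro i
    fin_cases i
    · exact hadj12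
    · exact hadj23
    · exact hadj34
    · exact hadj45
    · exact hadj51
  have hinj : Function.Injective cy := by
    intro i j h
    have hval := congrArg Subtype.val h
    fin_cases i <;> fin_cases j <;>
      first
        | rfl
        | (exact absurd hval (by first
            | exact hne12 | exact hne13 | exact hne14 | exact hne15
            | exact hne23 | exact hne24 | exact hne25
            | exact hne34 | exact hne35 | exact hne45
            | exact Ne.symm hne12 | exact Ne.symm hne13 | exact Ne.symm hne14
            | exact Ne.symm hne15 | exact Ne.symm hne23 | exact Ne.symm hne24
            | exact Ne.symm hne25 | exact Ne.symm hne34 | exact Ne.symm hne35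
            | exact Ne.symm hne45))
  refine ⟨⟨cy, hinj, hcyc⟩, ?_⟩
  -- chromatic number
  have hnc2 : ¬ (rotationGraphOn G Set.univ).Colorable 2 := by
    rintro ⟨C⟩
    have hv : ∀ i : Fin 5, (C (cy i)).val ≠ (C (cy (i + 1))).val :=
      fun i h => C.valid (hcyc i) (Fin.val_injective h)
    have h0 : (C (cy 0)).val ≠ (C (cy 1)).val := hv 0
    have h1 : (C (cy 1)).val ≠ (C (cy 2)).val := hv 1
    have h2 : (C (cy 2)).val ≠ (C (cy 3)).val := hv 2
    have h3 : (C (cy 3)).val ≠ (C (cy 4)).val := hv 3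
    have h4 : (C (cy 4)).val ≠ (C (cy 0)).val := hv 4
    have l0 : (C (cy 0)).val < 2 := (C (cy 0)).isLt
    have l1 : (C (cy 1)).val < 2 := (C (cy 1)).isLt
    have l2 : (C (cy 2)).val < 2 := (C (cy 2)).isLt
    have l3 : (C (cy 3)).val < 2 := (C (cy 3)).isLt
    have l4 : (C (cy 4)).val < 2 := (C (cy 4)).isLt
    omega
  by_contra hle
  rw [not_le] at hle
  have hle2 : (rotationGraphOn G Set.univ).chromaticNumber ≤ (2 : ℕ) := by
    have h32 : (3 : ℕ∞) = (2 : ℕ) + 1 := by norm_num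
    rw [h32] at hle
    exact (ENat.lt_add_one_iff (ENat.natCast_ne_top 2)).mp hle
  exact hnc2 (SimpleGraph.chromaticNumber_le_iff_colorable.mp hle2)
end

section
/- Let G be a connected graph, u and v true twins in G, and T, T' search trees on G. Then every shortest path from T to T' in the rotation graph R(G) contains exactly one edge given by a uv-rotation if u and v have different relative order in T and T', and contains no uv-rotation edge if u and v have the same relative order in T and T'. -/
open scoped Classical

universe u

variable {V : Type u}

/-! ### Auxiliary lemmas -/

section AuxChains

open Relation

variable {V : Type u}

lemma parent_fun (S : RTree V) {x y z : V} (h1 : S.parentRel x y) (h2 : S.parentRel x z) :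
    y = z := by
  unfold RTree.parentRel at h1 h2; rw [h1] at h2; exact Option.some.inj h2

lemma rtg_next (S : RTree V) {x y w : V} (h : ReflTransGen S.parentRel x y) (hxy : x ≠ y)
    (hw : S.parentRel x w) : ReflTransGen S.parentRel w y := by
  rcases h.cases_head with rfl | ⟨c, hc, hcy⟩
  · exact absurd rfl hxy
  · rw [parent_fun S hw hc]; exact hcy

lemma no_cycle (S : RTree V) (hroot : S.parent S.root = none) {x : V}
    (hx : ReflTransGen S.parentRel x S.root) : ¬ TransGen S.parentRel x x := by
  induction hx using ReflTransGen.head_induction_on with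
  | refl =>
    intro h
    obtain ⟨b, hb, -⟩ := (TransGen.head'_iff).1 h
    unfold RTree.parentRel at hb; rw [hroot] at hb; exact nomatch hb
  | head h1 h2 ih =>
    intro h
    obtain ⟨b, hb, hbx⟩ := (TransGen.head'_iff).1 h
    have hbc := parent_fun S hb h1
    subst hbc
    exact ih (TransGen.tail' hbx h1)

lemma rtg_antisymm (S : RTree V) (hroot : S.parent S.root = none) {x y : V}
    (hx : ReflTransGen S.parentRel x S.root)
    (h1 : ReflTransGen S.parentRel x y) (h2 : ReflTransGen S.parentRel y x) : x = y := by
  by_contra hxy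
  rcases h1.cases_head with rfl | ⟨c, hc, hcy⟩
  · exact hxy rfl
  · exact no_cycle S hroot hx (TransGen.head' hc (hcy.trans h2))

lemma rtg_total (S : RTree V) {x y z : V} (h1 : ReflTransGen S.parentRel x y)
    (h2 : ReflTransGen S.parentRel x z) :
    ReflTransGen S.parentRel y z ∨ ReflTransGen S.parentRel z y := by
  have key : ∀ p, ReflTransGen S.parentRel p y → ReflTransGen S.parentRel p z →
      ReflTransGen S.parentRel y z ∨ ReflTransGen S.parentRel z y := by
    intro p hp
    induction hp using ReflTransGen.head_induction_on with
    | refl => exact fun h => Or.inl h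
    | head h1' h2' ih =>
      intro hz
      rcases hz.cases_head with rfl | ⟨c, hc, hcz⟩
      · exact Or.inr (ReflTransGen.head h1' h2')
      · have := parent_fun S h1' hc
        subst this
        exact ih hcz
  exact key x h1 h2

lemma anc_transfer {S S' : RTree V} {x y : V}
    (h : ReflTransGen S.parentRel x y)
    (hyp : ∀ z, ReflTransGen S.parentRel x z → ReflTransGen S.parentRel z y → z ≠ y →
      S'.parent z = S.parent z) :
    ReflTransGen S'.parentRel x y := by
  have key : ∀ p, ReflTransGen S.parentRel p y →
      (∀ z, ReflTransGen S.parentRel p z → ReflTransGen S.parentRel z y → z ≠ y →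
        S'.parent z = S.parent z) → ReflTransGen S'.parentRel x y → True := fun _ _ _ _ => trivial
  clear key
  have key : ∀ p, ReflTransGen S.parentRel p y →
      (∀ z, ReflTransGen S.parentRel p z → ReflTransGen S.parentRel z y → z ≠ y →
        S'.parent z = S.parent z) → ReflTransGen S'.parentRel p y := by
    intro p hp
    induction hp using ReflTransGen.head_induction_on with
    | refl => exact fun _ => ReflTransGen.refl
    | head h1 h2 ih =>
      intro hyp'
      rename_i aa cc
      by_cases hay : aa = y
      · subst hay; exact ReflTransGen.refl
      · have hpar : S'.parent aa = S.parent aa :=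
          hyp' aa ReflTransGen.refl (ReflTransGen.head h1 h2) hay
        have hstep : S'.parentRel aa cc := by
          unfold RTree.parentRel at h1 ⊢; rw [hpar]; exact h1
        exact ReflTransGen.head hstep
          (ih (fun z hz1 hz2 hzy => hyp' z (ReflTransGen.head h1 hz1) hz2 hzy))
  exact key x h hyp

lemma rotate_parent_other (G : SimpleGraph V) (S : RTree V) {a b w : V}
    (hw1 : w ≠ b) (hw2 : w ≠ a) (hw3 : S.parent w ≠ some b) :
    (rotate G S a b).parent w = S.parent w := by
  simp [rotate, hw1, hw2, hw3]

lemma seg_transfer (G : SimpleGraph V) (S : RTree V) {a b x y : V}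
    (hxy : ReflTransGen S.parentRel x y)
    (hA : ∀ (_ : ReflTransGen S.parentRel x a) (_ : ReflTransGen S.parentRel a y), a = y)
    (hB : ¬ (ReflTransGen S.parentRel x b ∧ ReflTransGen S.parentRel b y)) :
    ReflTransGen (rotate G S a b).parentRel x y := by
  apply anc_transfer hxy
  intro z hz1 hz2 hzy
  apply rotate_parent_other
  · rintro rfl; exact hB ⟨hz1, hz2⟩
  · rintro rfl; exact hzy (hA hz1 hz2)
  · intro hpz
    have hRz : S.parentRel z b := hpz
    exact hB ⟨hz1.tail hRz, rtg_next S hz2 hzy hRz⟩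

end AuxChains


section Dpres

open Relation

variable {V : Type u}

/-- A rotation at a pair other than `{u,v}` preserves the fact that `u` is an ancestor
of `v`, provided `u` and `v` are adjacent. -/
lemma rotate_pres_anc (G : SimpleGraph V) (S : RTree V)
    (hroot : S.parent S.root = none)
    (hreach : ∀ x : V, ReflTransGen S.parentRel x S.root)
    {a b u v : V} (hpr : S.parent b = some a) (hne : u ≠ v) (hadj : G.Adj u v)
    (hp1 : ¬(a = u ∧ b = v)) (hp2 : ¬(a = v ∧ b = u))
    (hvs : v ∈ S.supp)
    (hanc : S.isAncestor u v) : (rotate G S a b).isAncestor u v := by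
  have hvu : ReflTransGen S.parentRel v u := hanc
  have hnc : ∀ x : V, ¬ TransGen S.parentRel x x := fun x => no_cycle S hroot (hreach x)
  have hanti : ∀ {x y : V}, ReflTransGen S.parentRel x y → ReflTransGen S.parentRel y x →
      x = y := fun {x y} h1 h2 => rtg_antisymm S hroot (hreach x) h1 h2
  have hRba : S.parentRel b a := hpr
  have hab : a ≠ b := by rintro rfl; exact hnc a (TransGen.single hRba)
  show ReflTransGen (rotate G S a b).parentRel v u
  by_cases hbC : ReflTransGen S.parentRel v b ∧ ReflTransGen S.parentRel b u
  · by_cases hbu : b = u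
    · subst hbu
      have hvb : v ≠ b := fun h => hne (h ▸ rfl)
      obtain ⟨w, hvw, hwb⟩ : ∃ w, ReflTransGen S.parentRel v w ∧ S.parentRel w b := by
        rcases hvu.cases_tail with h | h
        · exact absurd h.symm hvb
        · exact h
      have hseg : ReflTransGen (rotate G S a b).parentRel v w := by
        apply seg_transfer
        · exact hvw
        · intro h1 h2; exact absurd (TransGen.tail' (h2.tail hwb) hRba) (hnc a)
        · rintro ⟨h1, h2⟩; exact hnc b (TransGen.tail' h2 hwb)
      have hwa : w ≠ a := fun h =>
        hnc a (TransGen.head' (h ▸ hwb) (ReflTransGen.single hRba))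
      have hwb' : w ≠ b := fun h => hnc b (TransGen.single (h ▸ hwb))
      have hwpar : S.parent w = some b := hwb
      by_cases hcond : ∃ z ∈ S.descendants w, G.Adj a z
      · have h1 : (rotate G S a b).parentRel w a := by
          show (rotate G S a b).parent w = some a
          simp [rotate, hwb', hwa, hwpar, hcond]
        have h2 : (rotate G S a b).parentRel a b := by
          show (rotate G S a b).parent a = some b
          simp [rotate, hab]
        exact (hseg.tail h1).tail h2
      · have h1 : (rotate G S a b).parentRel w b := by
          show (rotate G S a b).parent w = some b
          simp [rotate, hwb', hwa, hwpar, hcond]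
        exact hseg.tail h1
    · have hau' : ReflTransGen S.parentRel a u := rtg_next S hbC.2 hbu hRba
      by_cases hbv : b = v
      · subst hbv
        have hau : a ≠ u := fun h => hp1 ⟨h, rfl⟩
        obtain ⟨p, hap, hpu⟩ : ∃ p, S.parentRel a p ∧ ReflTransGen S.parentRel p u := by
          rcases hau'.cases_head with h | h
          · exact absurd h hau
          · exact h
        have step1 : (rotate G S a b).parentRel b p := by
          show (rotate G S a b).parent b = some p
          simp [rotate]; exact hap
        have hseg : ReflTransGen (rotate G S a b).parentRel p u := by
          apply seg_transfer
          · exact hpu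
          · intro h1 _; exact absurd (TransGen.head' hap h1) (hnc a)
          · rintro ⟨hpb, hbu2⟩
            exact hnc b (TransGen.head' hRba ((ReflTransGen.single hap).trans hpb))
        exact ReflTransGen.head step1 hseg
      · obtain ⟨w, hvw, hwb⟩ : ∃ w, ReflTransGen S.parentRel v w ∧ S.parentRel w b := by
          rcases hbC.1.cases_tail with h | h
          · exact absurd h.symm (Ne.symm hbv)
          · exact h
        have hwb' : w ≠ b := fun h => hnc b (TransGen.single (h ▸ hwb))
        have hwa : w ≠ a := fun h =>
          hnc a (TransGen.head' (h ▸ hwb) (ReflTransGen.single hRba))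
        have hwpar : S.parent w = some b := hwb
        have hseg1 : ReflTransGen (rotate G S a b).parentRel v w := by
          apply seg_transfer
          · exact hvw
          · intro h1 h2; exact absurd (TransGen.tail' (h2.tail hwb) hRba) (hnc a)
          · rintro ⟨_, h2⟩; exact hnc b (TransGen.tail' h2 hwb)
        by_cases hau : a = u
        · subst hau
          have hcond : ∃ z ∈ S.descendants w, G.Adj a z := ⟨v, ⟨hvs, hvw⟩, hadj⟩
          have hstep : (rotate G S a b).parentRel w a := by
            show (rotate G S a b).parent w = some a
            simp [rotate, hwb', hwa, hwpar, hcond]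
          exact hseg1.tail hstep
        · obtain ⟨p, hap, hpu⟩ : ∃ p, S.parentRel a p ∧ ReflTransGen S.parentRel p u := by
            rcases hau'.cases_head with h | h
            · exact absurd h hau
            · exact h
          have hseg2 : ReflTransGen (rotate G S a b).parentRel p u := by
            apply seg_transfer
            · exact hpu
            · intro h1 _; exact absurd (TransGen.head' hap h1) (hnc a)
            · rintro ⟨hpb, _⟩
              exact hnc b (TransGen.head' hRba ((ReflTransGen.single hap).trans hpb))
          have hstep2 : (rotate G S a b).parentRel b p := by
            show (rotate G S a b).parent b = some p
            simp [rotate]; exact hap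
          by_cases hcond : ∃ z ∈ S.descendants w, G.Adj a z
          · have hstep1 : (rotate G S a b).parentRel w a := by
              show (rotate G S a b).parent w = some a
              simp [rotate, hwb', hwa, hwpar, hcond]
            have hstepa : (rotate G S a b).parentRel a b := by
              show (rotate G S a b).parent a = some b
              simp [rotate, hab]
            exact ((((hseg1.tail hstep1).tail hstepa).tail hstep2)).trans hseg2
          · have hstep1 : (rotate G S a b).parentRel w b := by
              show (rotate G S a b).parent w = some b
              simp [rotate, hwb', hwa, hwpar, hcond]
            exact (((hseg1.tail hstep1).tail hstep2)).trans hseg2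
  · by_cases haC : ReflTransGen S.parentRel v a ∧ ReflTransGen S.parentRel a u
    · by_cases hau : a = u
      · subst hau
        apply seg_transfer
        · exact hvu
        · intro _ _; rfl
        · exact hbC
      · by_cases hav : a = v
        · subst hav
          obtain ⟨p, hap, hpu⟩ : ∃ p, S.parentRel a p ∧ ReflTransGen S.parentRel p u := by
            rcases haC.2.cases_head with h | h
            · exact absurd h hau
            · exact h
          have step1 : (rotate G S a b).parentRel a b := by
            show (rotate G S a b).parent a = some b
            simp [rotate, hab]
          have step2 : (rotate G S a b).parentRel b p := by
            show (rotate G S a b).parent b = some p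
            simp [rotate]; exact hap
          have hseg : ReflTransGen (rotate G S a b).parentRel p u := by
            apply seg_transfer
            · exact hpu
            · intro h1 _; exact absurd (TransGen.head' hap h1) (hnc a)
            · rintro ⟨hpb, hbu2⟩
              exact hbC ⟨(ReflTransGen.single hap).trans hpb, hbu2⟩
          exact (ReflTransGen.head step1 (ReflTransGen.single step2)).trans hseg
        · obtain ⟨y', hvy, hya⟩ : ∃ y', ReflTransGen S.parentRel v y' ∧ S.parentRel y' a := by
            rcases haC.1.cases_tail with h | h
            · exact absurd h.symm (Ne.symm hav)
            · exact h
          obtain ⟨p, hap, hpu⟩ : ∃ p, S.parentRel a p ∧ ReflTransGen S.parentRel p u := by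
            rcases haC.2.cases_head with h | h
            · exact absurd h hau
            · exact h
          have hy'a : y' ≠ a := fun h => hnc a (TransGen.single (h ▸ hya))
          have hy'b : y' ≠ b := fun h =>
            hbC ⟨h ▸ hvy, (ReflTransGen.single (h ▸ hya)).trans haC.2⟩
          have hseg1 : ReflTransGen (rotate G S a b).parentRel v y' := by
            apply seg_transfer
            · exact hvy
            · intro h1 h2; exact absurd (TransGen.tail' h2 hya) (hnc a)
            · rintro ⟨hvb2, hby⟩; exact hbC ⟨hvb2, (hby.tail hya).trans haC.2⟩
          have step0 : (rotate G S a b).parentRel y' a := by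
            show (rotate G S a b).parent y' = some a
            rw [rotate_parent_other G S hy'b hy'a (by
              rw [show S.parent y' = some a from hya]
              intro h; exact hab (Option.some.inj h))]
            exact hya
          have step1 : (rotate G S a b).parentRel a b := by
            show (rotate G S a b).parent a = some b
            simp [rotate, hab]
          have step2 : (rotate G S a b).parentRel b p := by
            show (rotate G S a b).parent b = some p
            simp [rotate]; exact hap
          have hseg2 : ReflTransGen (rotate G S a b).parentRel p u := by
            apply seg_transfer
            · exact hpu
            · intro h1 _; exact absurd (TransGen.head' hap h1) (hnc a)
            · rintro ⟨hpb, hbu2⟩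
              exact hbC ⟨((hvy.tail hya).tail hap).trans hpb, hbu2⟩
          exact ((((hseg1.tail step0).tail step1).tail step2)).trans hseg2
    · apply seg_transfer
      · exact hvu
      · intro h1 h2; exact absurd ⟨h1, h2⟩ haC
      · exact hbC

end Dpres


section MapInv

open Relation

variable {V : Type u}

lemma RTree.ext' {T T' : RTree V} (h1 : T.supp = T'.supp) (h2 : T.root = T'.root)
    (h3 : T.parent = T'.parent) : T = T' := by
  cases T; cases T'; simp_all

noncomputable def swapMap (u v : V) : V → V := fun w => if w = u then v else if w = v then u else w

lemma swapMap_invol (u v : V) : Function.Involutive (swapMap u v) := by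
  intro x
  unfold swapMap
  split_ifs <;> simp_all

lemma swapMap_comm (u v : V) : swapMap u v = swapMap v u := by
  funext x
  unfold swapMap
  split_ifs <;> simp_all

lemma swapMap_left (u v : V) : swapMap u v u = v := by simp [swapMap]

lemma swapMap_right (u v : V) : swapMap u v v = u := by
  unfold swapMap
  split_ifs <;> simp_all

def mapInv (φ : V → V) (S : RTree V) : RTree V where
  supp := φ '' S.supp
  root := φ S.root
  parent := fun w => Option.map φ (S.parent (φ w))

variable {φ : V → V}

lemma invol_mem_image (hφ : Function.Involutive φ) {s : Set V} {x : V} :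
    x ∈ φ '' s ↔ φ x ∈ s := by
  constructor
  · rintro ⟨z, hz, rfl⟩; rwa [hφ]
  · intro h; exact ⟨φ x, h, hφ x⟩

lemma mapInv_mem_supp (hφ : Function.Involutive φ) (S : RTree V) {x : V} :
    x ∈ (mapInv φ S).supp ↔ φ x ∈ S.supp := invol_mem_image hφ

lemma mapInv_parentRel (hφ : Function.Involutive φ) (S : RTree V) {x y : V} :
    (mapInv φ S).parentRel x y ↔ S.parentRel (φ x) (φ y) := by
  unfold RTree.parentRel mapInv
  cases h : S.parent (φ x) <;> simp [h]
  exact ⟨fun h' => by rw [← h', hφ], fun h' => by rw [h', hφ]⟩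

lemma rtg_map_of (R R' : V → V → Prop) (f : V → V) (h : ∀ p q, R p q → R' (f p) (f q))
    {x y : V} (hh : ReflTransGen R x y) : ReflTransGen R' (f x) (f y) := by
  induction hh with
  | refl => exact ReflTransGen.refl
  | tail h1 h2 ih => exact ih.tail (h _ _ h2)

lemma mapInv_anc (hφ : Function.Involutive φ) (S : RTree V) {x y : V} :
    (mapInv φ S).isAncestor x y ↔ S.isAncestor (φ x) (φ y) := by
  unfold RTree.isAncestor
  constructor
  · exact fun h => rtg_map_of _ _ φ (fun p q hpq => (mapInv_parentRel hφ S).1 hpq) h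
  · intro h
    have := rtg_map_of S.parentRel (mapInv φ S).parentRel φ
      (fun p q hpq => (mapInv_parentRel hφ S).2 (by rw [hφ, hφ]; exact hpq)) h
    rwa [hφ, hφ] at this

lemma mapInv_desc (hφ : Function.Involutive φ) (S : RTree V) {c x : V} :
    x ∈ (mapInv φ S).descendants c ↔ φ x ∈ S.descendants (φ c) := by
  unfold RTree.descendants
  simp only [Set.mem_setOf_eq]
  rw [mapInv_mem_supp hφ, mapInv_anc hφ]

lemma mapInv_mapInv (hφ : Function.Involutive φ) (S : RTree V) :
    mapInv φ (mapInv φ S) = S := by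
  apply RTree.ext'
  · ext x
    rw [show (mapInv φ (mapInv φ S)).supp = φ '' (mapInv φ S).supp from rfl,
      invol_mem_image hφ, mapInv_mem_supp hφ, hφ]
  · show φ (φ S.root) = S.root; rw [hφ]
  · funext w
    show Option.map φ (Option.map φ (S.parent (φ (φ w)))) = S.parent w
    rw [hφ, Option.map_map]
    have : φ ∘ φ = id := funext hφ
    rw [this, Option.map_id, id]

variable {G : SimpleGraph V}

lemma mapInv_reach (hφ : Function.Involutive φ) (hG : ∀ a b, G.Adj (φ a) (φ b) ↔ G.Adj a b)
    {s : Set V} {a b : V} (h : reachWithin G s a b) :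
    reachWithin G (φ '' s) (φ a) (φ b) := by
  apply rtg_map_of _ _ φ _ h
  rintro p q ⟨hp, hq, hpq⟩
  exact ⟨⟨p, hp, rfl⟩, ⟨q, hq, rfl⟩, (hG p q).2 hpq⟩

lemma mapInv_reach_iff (hφ : Function.Involutive φ) (hG : ∀ a b, G.Adj (φ a) (φ b) ↔ G.Adj a b)
    {s : Set V} {x y : V} :
    reachWithin G (φ '' s) x y ↔ reachWithin G s (φ x) (φ y) := by
  constructor
  · intro h
    have := mapInv_reach hφ hG h
    rwa [show φ '' (φ '' s) = s from by
      ext z; rw [invol_mem_image hφ, invol_mem_image hφ, hφ]] at this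
  · intro h
    have := mapInv_reach hφ hG h
    rwa [hφ, hφ] at this

lemma mapInv_WF (hφ : Function.Involutive φ) (S : RTree V) (hwf : S.WF) :
    (mapInv φ S).WF := by
  obtain ⟨h1, h2, h3, h4, h5⟩ := hwf
  refine ⟨⟨S.root, h1, rfl⟩, ?_, ?_, ?_, ?_⟩
  · show Option.map φ (S.parent (φ (φ S.root))) = none
    rw [hφ, h2]; rfl
  · intro w hw
    have : φ w ∉ S.supp := fun hc => hw ((mapInv_mem_supp hφ S).2 hc)
    show Option.map φ (S.parent (φ w)) = none
    rw [h3 _ this]; rfl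
  · intro w hw hwr
    have hws : φ w ∈ S.supp := (mapInv_mem_supp hφ S).1 hw
    have hr : φ w ≠ S.root := by
      intro hc
      exact hwr (by show w = φ S.root; rw [← hc, hφ])
    obtain ⟨p, hp, hpp⟩ := h4 (φ w) hws hr
    exact ⟨φ p, ⟨p, hp, rfl⟩, by show Option.map φ (S.parent (φ w)) = some (φ p); rw [hpp]; rfl⟩
  · intro w hw
    have hws := (mapInv_mem_supp hφ S).1 hw
    show (mapInv φ S).isAncestor (φ S.root) w
    rw [mapInv_anc hφ, hφ]
    exact h5 (φ w) hws

lemma mapInv_subtreeAt (hφ : Function.Involutive φ) (S : RTree V) (c : V) :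
    mapInv φ (S.subtreeAt (φ c)) = (mapInv φ S).subtreeAt c := by
  apply RTree.ext'
  · ext x
    rw [show (mapInv φ (S.subtreeAt (φ c))).supp = φ '' (S.subtreeAt (φ c)).supp from rfl]
    rw [invol_mem_image hφ]
    show φ x ∈ S.descendants (φ c) ↔ x ∈ ((mapInv φ S).subtreeAt c).supp
    rw [show ((mapInv φ S).subtreeAt c).supp = (mapInv φ S).descendants c from rfl,
      mapInv_desc hφ]
  · show φ ((S.subtreeAt (φ c)).root) = c
    show φ (φ c) = c
    rw [hφ]
  · funext w
    show Option.map φ ((S.subtreeAt (φ c)).parent (φ w)) = ((mapInv φ S).subtreeAt c).parent w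
    unfold RTree.subtreeAt
    simp only
    by_cases h1 : w = c
    · subst h1; simp
    · have h1' : φ w ≠ φ c := fun hc => h1 (by rw [← hφ w, hc, hφ])
      rw [if_neg h1', if_neg h1]
      by_cases h2 : φ w ∈ S.descendants (φ c)
      · rw [if_pos h2, if_pos ((mapInv_desc hφ S).2 h2)]
        rfl
      · rw [if_neg h2, if_neg (fun hc => h2 ((mapInv_desc hφ S).1 hc))]
        rfl

lemma mapInv_searchTreeRec (hφ : Function.Involutive φ)
    (hG : ∀ a b, G.Adj (φ a) (φ b) ↔ G.Adj a b) {S : RTree V}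
    (h : IsSearchTreeRec G S) : IsSearchTreeRec G (mapInv φ S) := by
  induction h with
  | intro T hwf hconn hcomp hrec ih =>
    refine IsSearchTreeRec.intro _ (mapInv_WF hφ T hwf) ?_ ?_ ?_
    · intro x hx y hy
      have := hconn (φ x) ((mapInv_mem_supp hφ T).1 hx) (φ y) ((mapInv_mem_supp hφ T).1 hy)
      exact (mapInv_reach_iff hφ hG).2 this
    · intro c hc w
      have hc' : T.parent (φ c) = some T.root := by
        have h2 := (mapInv_parentRel hφ T).1 (show (mapInv φ T).parentRel c (φ T.root) from hc)
        unfold RTree.parentRel at h2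
        rwa [hφ] at h2
      have key := hcomp (φ c) hc' (φ w)
      constructor
      · intro hw
        have := key.1 ((mapInv_desc hφ T).1 hw)
        refine ⟨(mapInv_mem_supp hφ T).2 this.1, ?_, ?_⟩
        · intro hc2
          exact this.2.1 (by rw [hc2]; exact hφ T.root)
        · have hset : (mapInv φ T).supp \ {(mapInv φ T).root} = φ '' (T.supp \ {T.root}) := by
            ext z
            simp only [Set.mem_diff, Set.mem_singleton_iff]
            rw [invol_mem_image hφ]
            simp only [Set.mem_diff, Set.mem_singleton_iff]
            rw [mapInv_mem_supp hφ]
            constructor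
            · rintro ⟨hz1, hz2⟩
              exact ⟨hz1, fun hc3 => hz2 (by show z = φ T.root; rw [← hc3, hφ])⟩
            · rintro ⟨hz1, hz2⟩
              exact ⟨hz1, fun hc3 => hz2 (by rw [hc3]; exact hφ T.root)⟩
          rw [hset, mapInv_reach_iff hφ hG]
          exact this.2.2
      · rintro ⟨hw1, hw2, hw3⟩
        apply (mapInv_desc hφ T).2
        apply key.2
        refine ⟨(mapInv_mem_supp hφ T).1 hw1, ?_, ?_⟩
        · intro hc2
          apply hw2
          show w = φ T.root
          rw [← hc2, hφ]
        · have hset : (mapInv φ T).supp \ {(mapInv φ T).root} = φ '' (T.supp \ {T.root}) := by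
            ext z
            simp only [Set.mem_diff, Set.mem_singleton_iff]
            rw [invol_mem_image hφ]
            simp only [Set.mem_diff, Set.mem_singleton_iff]
            rw [mapInv_mem_supp hφ]
            constructor
            · rintro ⟨hz1, hz2⟩
              exact ⟨hz1, fun hc3 => hz2 (by show z = φ T.root; rw [← hc3, hφ])⟩
            · rintro ⟨hz1, hz2⟩
              exact ⟨hz1, fun hc3 => hz2 (by rw [hc3]; exact hφ T.root)⟩
          rw [hset, mapInv_reach_iff hφ hG] at hw3
          exact hw3
    · intro c hc
      have hc' : T.parent (φ c) = some T.root := by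
        have h2 := (mapInv_parentRel hφ T).1 (show (mapInv φ T).parentRel c (φ T.root) from hc)
        unfold RTree.parentRel at h2
        rwa [hφ] at h2
      have := ih (φ c) hc'
      rwa [mapInv_subtreeAt hφ] at this

end MapInv


section MapRotate

open Relation

variable {V : Type u} {φ : V → V} {G : SimpleGraph V}

lemma mapInv_rotate (hφ : Function.Involutive φ)
    (hG : ∀ a b, G.Adj (φ a) (φ b) ↔ G.Adj a b) (S : RTree V) (a b : V) :
    mapInv φ (rotate G S a b) = rotate G (mapInv φ S) (φ a) (φ b) := by
  have hinj : Function.Injective φ := hφ.injective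
  apply RTree.ext'
  · rfl
  · show φ (if S.root = a then b else S.root) = if (mapInv φ S).root = φ a then φ b else (mapInv φ S).root
    show φ (if S.root = a then b else S.root) = if φ S.root = φ a then φ b else φ S.root
    by_cases h : S.root = a
    · rw [if_pos h, if_pos (by rw [h])]
    · rw [if_neg h, if_neg (fun hc => h (hinj hc))]
  · funext w
    show Option.map φ ((rotate G S a b).parent (φ w)) = (rotate G (mapInv φ S) (φ a) (φ b)).parent w
    by_cases h1 : w = φ b
    · have h1' : φ w = b := by rw [h1, hφ]
      rw [show (rotate G (mapInv φ S) (φ a) (φ b)).parent w =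
        (mapInv φ S).parent (φ a) from by simp [rotate, h1]]
      rw [show (rotate G S a b).parent (φ w) = S.parent a from by simp [rotate, h1']]
      show Option.map φ (S.parent a) = Option.map φ (S.parent (φ (φ a)))
      rw [hφ]
    · have h1' : φ w ≠ b := fun hc => h1 (by rw [← hc, hφ])
      by_cases h2 : w = φ a
      · have h2' : φ w = a := by rw [h2, hφ]
        have hab : a ≠ b := fun hc => h1 (h2.trans (by rw [hc]))
        have hab' : φ a ≠ φ b := fun hc => hab (hφ.injective hc)
        rw [show (rotate G (mapInv φ S) (φ a) (φ b)).parent w = some (φ b) from by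
          simp [rotate, h1, h2, hab']]
        rw [show (rotate G S a b).parent (φ w) = some b from by simp [rotate, h1', h2', hab]]
        rfl
      · have h2' : φ w ≠ a := fun hc => h2 (by rw [← hc, hφ])
        by_cases h3 : S.parent (φ w) = some b
        · have h3' : (mapInv φ S).parent w = some (φ b) := by
            show Option.map φ (S.parent (φ w)) = some (φ b)
            rw [h3]; rfl
          have hcond : (∃ z ∈ S.descendants (φ w), G.Adj a z) ↔
              (∃ z ∈ (mapInv φ S).descendants w, G.Adj (φ a) z) := by
            constructor
            · rintro ⟨z, hz, hadj⟩
              refine ⟨φ z, (mapInv_desc hφ S).2 (by rwa [hφ]), ?_⟩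
              rw [show G.Adj (φ a) (φ z) ↔ G.Adj a z from hG a z]
              exact hadj
            · rintro ⟨z, hz, hadj⟩
              refine ⟨φ z, (mapInv_desc hφ S).1 hz, ?_⟩
              have := (hG a (φ z)).1
              rw [hφ] at this
              exact this hadj
          rw [show (rotate G S a b).parent (φ w) =
            (if ∃ z ∈ S.descendants (φ w), G.Adj a z then some a else some b) from by
            simp [rotate, h1', h2', h3]]
          rw [show (rotate G (mapInv φ S) (φ a) (φ b)).parent w =
            (if ∃ z ∈ (mapInv φ S).descendants w, G.Adj (φ a) z then some (φ a) else some (φ b))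
            from by simp [rotate, h1, h2, h3']]
          by_cases hc : ∃ z ∈ S.descendants (φ w), G.Adj a z
          · rw [if_pos hc, if_pos (hcond.1 hc)]; rfl
          · rw [if_neg hc, if_neg (fun hx => hc (hcond.2 hx))]; rfl
        · have h3' : (mapInv φ S).parent w ≠ some (φ b) := by
            intro hc
            have : S.parentRel (φ w) (φ (φ b)) := (mapInv_parentRel hφ S).1 hc
            rw [hφ] at this
            exact h3 this
          rw [show (rotate G S a b).parent (φ w) = S.parent (φ w) from by
            simp [rotate, h1', h2', h3]]
          rw [show (rotate G (mapInv φ S) (φ a) (φ b)).parent w = (mapInv φ S).parent w from by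
            simp [rotate, h1, h2, h3']]
          rfl

lemma mapInv_isRotation (hφ : Function.Involutive φ)
    (hG : ∀ a b, G.Adj (φ a) (φ b) ↔ G.Adj a b) {S S' : RTree V}
    (h : IsRotation G S S') : IsRotation G (mapInv φ S) (mapInv φ S') := by
  obtain ⟨a, b, hab, rfl⟩ := h
  refine ⟨φ a, φ b, ?_, (mapInv_rotate hφ hG S a b).symm ▸ rfl⟩
  show (mapInv φ S).parent (φ b) = some (φ a)
  show Option.map φ (S.parent (φ (φ b))) = some (φ a)
  rw [hφ, hab]; rfl

lemma mapInv_isSearchTree (hφ : Function.Involutive φ)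
    (hG : ∀ a b, G.Adj (φ a) (φ b) ↔ G.Adj a b) {S : RTree V}
    (h : IsSearchTree G S) : IsSearchTree G (mapInv φ S) := by
  obtain ⟨hsupp, hrec⟩ := h
  refine ⟨?_, mapInv_searchTreeRec hφ hG hrec⟩
  rw [show (mapInv φ S).supp = φ '' S.supp from rfl, hsupp]
  ext x
  simp only [Set.mem_univ, iff_true]
  exact ⟨φ x, trivial, hφ x⟩

end MapRotate


section Structural

open Relation

variable {V : Type u} {G : SimpleGraph V}

lemma IsSearchTreeRec.wf {S : RTree V} (h : IsSearchTreeRec G S) : S.WF := by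
  cases h; assumption

lemma IsSearchTreeRec.conn {S : RTree V} (h : IsSearchTreeRec G S) :
    ∀ a ∈ S.supp, ∀ b ∈ S.supp, reachWithin G S.supp a b := by
  cases h; assumption

lemma IsSearchTreeRec.comp {S : RTree V} (h : IsSearchTreeRec G S) :
    ∀ c, S.parent c = some S.root → ∀ w, w ∈ S.descendants c ↔
      (w ∈ S.supp ∧ w ≠ S.root ∧ reachWithin G (S.supp \ {S.root}) c w) := by
  cases h; assumption

lemma IsSearchTreeRec.recs {S : RTree V} (h : IsSearchTreeRec G S) :
    ∀ c, S.parent c = some S.root → IsSearchTreeRec G (S.subtreeAt c) := by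
  cases h; assumption

lemma wf_reach_root {S : RTree V} (hwf : S.WF) {x : V} (hx : x ∈ S.supp) :
    ReflTransGen S.parentRel x S.root := hwf.2.2.2.2 x hx

lemma supp_closed {S : RTree V} (hwf : S.WF) {x y : V} (hx : x ∈ S.supp)
    (h : ReflTransGen S.parentRel x y) : y ∈ S.supp := by
  induction h with
  | refl => exact hx
  | tail h1 h2 ih =>
    rename_i b c
    by_cases hb : b = S.root
    · rw [hb] at h2
      unfold RTree.parentRel at h2
      rw [hwf.2.1] at h2
      exact nomatch h2
    · obtain ⟨p, hp, hpp⟩ := hwf.2.2.2.1 b ih hb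
      have : c = p := by
        unfold RTree.parentRel at h2
        rw [hpp] at h2
        exact (Option.some.inj h2).symm
      rwa [this]

lemma subtreeAt_parent_eq {S : RTree V} {c w : V} (hw : w ∈ S.descendants c) (hwc : w ≠ c) :
    (S.subtreeAt c).parent w = S.parent w := by
  simp [RTree.subtreeAt, hwc, hw]

lemma subtreeAt_parentRel_sub {S : RTree V} {c x y : V} (h : (S.subtreeAt c).parentRel x y) :
    S.parentRel x y := by
  unfold RTree.parentRel RTree.subtreeAt at h
  simp only at h
  by_cases h1 : x = c
  · rw [if_pos h1] at h; exact nomatch h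
  · rw [if_neg h1] at h
    by_cases h2 : x ∈ S.descendants c
    · rw [if_pos h2] at h; exact h
    · rw [if_neg h2] at h; exact nomatch h

lemma subtreeAt_anc_sub {S : RTree V} {c x y : V} (h : (S.subtreeAt c).isAncestor x y) :
    S.isAncestor x y :=
  by
    unfold RTree.isAncestor at h ⊢
    induction h with
    | refl => exact Relation.ReflTransGen.refl
    | tail _ hbc ih => exact ih.tail (subtreeAt_parentRel_sub hbc)

lemma descendants_subtreeAt {S : RTree V} (hwf : S.WF) {c x : V} (hx : x ∈ S.descendants c) :
    (S.subtreeAt c).descendants x = S.descendants x := by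
  have hx2 : ReflTransGen S.parentRel x c := hx.2
  ext z
  constructor
  · rintro ⟨hz1, hz2⟩
    exact ⟨hz1.1, subtreeAt_anc_sub hz2⟩
  · rintro ⟨hz1, hz2⟩
    have hz2' : ReflTransGen S.parentRel z x := hz2
    refine ⟨⟨hz1, hz2'.trans hx2⟩, ?_⟩
    apply anc_transfer hz2'
    intro z' h1 h2 h3
    have hz'supp : z' ∈ S.supp := supp_closed hwf hz1 h1
    have hz'c : z' ≠ c := by
      rintro rfl
      exact h3 (rtg_antisymm S hwf.2.1 (wf_reach_root hwf hz'supp) h2 hx2)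
    exact subtreeAt_parent_eq ⟨hz'supp, h2.trans hx2⟩ hz'c

lemma subtreeAt_root_eq {S : RTree V} (hwf : S.WF) : S.subtreeAt S.root = S := by
  apply RTree.ext'
  · ext z
    exact ⟨fun h => h.1, fun h => ⟨h, hwf.2.2.2.2 z h⟩⟩
  · rfl
  · funext w
    by_cases h1 : w = S.root
    · subst h1
      show (if S.root = S.root then none else _) = _
      rw [if_pos rfl, hwf.2.1]
    · by_cases h2 : w ∈ S.descendants S.root
      · show (if w = S.root then none else if w ∈ S.descendants S.root then S.parent w else none) = _
        rw [if_neg h1, if_pos h2]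
      · have hws : w ∉ S.supp := fun hw => h2 ⟨hw, hwf.2.2.2.2 w hw⟩
        show (if w = S.root then none else if w ∈ S.descendants S.root then S.parent w else none) = _
        rw [if_neg h1, if_neg h2, hwf.2.2.1 w hws]

lemma subtreeAt_trans {S : RTree V} (hwf : S.WF) {c x : V} (hx : x ∈ S.descendants c) :
    (S.subtreeAt c).subtreeAt x = S.subtreeAt x := by
  have hD := descendants_subtreeAt hwf hx
  apply RTree.ext'
  · exact hD
  · rfl
  · funext w
    by_cases h1 : w = x
    · show (if w = x then none else _) = (if w = x then none else _)
      rw [if_pos h1, if_pos h1]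
    · show (if w = x then none else if w ∈ (S.subtreeAt c).descendants x then
        (S.subtreeAt c).parent w else none) =
        (if w = x then none else if w ∈ S.descendants x then S.parent w else none)
      rw [if_neg h1, if_neg h1, hD]
      by_cases h2 : w ∈ S.descendants x
      · rw [if_pos h2, if_pos h2]
        have hx2 : ReflTransGen S.parentRel x c := hx.2
        have h22 : ReflTransGen S.parentRel w x := h2.2
        have hwc : w ≠ c := by
          rintro rfl
          exact h1 (rtg_antisymm S hwf.2.1 (wf_reach_root hwf h2.1) h22 hx2)
        exact subtreeAt_parent_eq ⟨h2.1, h22.trans hx2⟩ hwc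
      · rw [if_neg h2, if_neg h2]

lemma searchTreeRec_subtreeAt {S : RTree V} (h : IsSearchTreeRec G S) :
    ∀ x ∈ S.supp, IsSearchTreeRec G (S.subtreeAt x) := by
  induction h with
  | intro T hwf hconn hcomp hrec ih =>
    intro x hx
    by_cases hxr : x = T.root
    · subst hxr
      rw [subtreeAt_root_eq hwf]
      exact IsSearchTreeRec.intro T hwf hconn hcomp hrec
    · obtain ⟨c, hxc, hcr⟩ : ∃ c, ReflTransGen T.parentRel x c ∧ T.parentRel c T.root := by
        rcases (wf_reach_root hwf hx).cases_tail with h' | h'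
        · exact absurd h'.symm hxr
        · exact h'
      have hxdesc : x ∈ T.descendants c := ⟨hx, hxc⟩
      have := ih c hcr x (show x ∈ (T.subtreeAt c).supp from hxdesc)
      rwa [subtreeAt_trans hwf hxdesc] at this

lemma reachWithin_symm {s : Set V} {a b : V} (h : reachWithin G s a b) : reachWithin G s b a := by
  have hs : Symmetric (fun a b : V => a ∈ s ∧ b ∈ s ∧ G.Adj a b) :=
    fun x y ⟨h1, h2, h3⟩ => ⟨h2, h1, h3.symm⟩
  unfold reachWithin at h ⊢
  induction h with
  | refl => exact ReflTransGen.refl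
  | tail _ hbc ih => exact ReflTransGen.head (hs hbc) ih

lemma reach_avoid {s : Set V} {r a c : V} (h : reachWithin G s a c) (hc : c ≠ r) :
    reachWithin G (s \ {r}) a c ∨
      ∃ z, G.Adj r z ∧ z ∈ s ∧ z ≠ r ∧ reachWithin G (s \ {r}) z c := by
  induction h using ReflTransGen.head_induction_on with
  | refl => exact Or.inl ReflTransGen.refl
  | @head aa bb h1 h2 ih =>
    obtain ⟨ha, hb, hadj⟩ := h1
    rcases ih with hbc | ⟨z, hz1, hz2, hz3, hz4⟩
    · have hbne : bb ≠ r := by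
        rcases hbc.cases_head with h' | ⟨d, hd, -⟩
        · rw [h']; exact hc
        · exact hd.1.2
      by_cases har : aa = r
      · exact Or.inr ⟨bb, har ▸ hadj, hb, hbne, hbc⟩
      · exact Or.inl (ReflTransGen.head ⟨⟨ha, har⟩, ⟨hb, hbne⟩, hadj⟩ hbc)
    · exact Or.inr ⟨z, hz1, hz2, hz3, hz4⟩

lemma child_nbr {S : RTree V} (hST : IsSearchTreeRec G S) {w : V}
    (hw : S.parent w = some S.root) : ∃ z, G.Adj S.root z ∧ z ∈ S.descendants w := by
  have hwf := hST.wf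
  have hwsupp : w ∈ S.supp := by
    by_contra h
    rw [hwf.2.2.1 w h] at hw
    exact nomatch hw
  have hwr : w ≠ S.root := by
    rintro rfl
    rw [hwf.2.1] at hw
    exact nomatch hw
  have hre : reachWithin G S.supp S.root w := hST.conn _ hwf.1 _ hwsupp
  rcases reach_avoid hre hwr with h | ⟨z, hadj, hz1, hz2, hz3⟩
  · rcases h.cases_head with h' | ⟨d, hd, -⟩
    · exact absurd h'.symm hwr
    · exact absurd rfl hd.1.2
  · refine ⟨z, hadj, (hST.comp w hw z).2 ⟨hz1, hz2, reachWithin_symm hz3⟩⟩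

lemma comparable_of_adj {S : RTree V} (h : IsSearchTreeRec G S) :
    ∀ x y, G.Adj x y → x ∈ S.supp → y ∈ S.supp →
      S.isAncestor x y ∨ S.isAncestor y x := by
  induction h with
  | intro T hwf hconn hcomp hrec ih =>
    intro x y hadj hx hy
    by_cases hxr : x = T.root
    · subst hxr; exact Or.inl (hwf.2.2.2.2 y hy)
    · by_cases hyr : y = T.root
      · subst hyr; exact Or.inr (hwf.2.2.2.2 x hx)
      · obtain ⟨c, hxc, hcr⟩ : ∃ c, ReflTransGen T.parentRel x c ∧ T.parentRel c T.root := by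
          rcases (wf_reach_root hwf hx).cases_tail with h' | h'
          · exact absurd h'.symm hxr
          · exact h'
        have hxdesc : x ∈ T.descendants c := ⟨hx, hxc⟩
        have hreachcx : reachWithin G (T.supp \ {T.root}) c x := ((hcomp c hcr x).1 hxdesc).2.2
        have hydesc : y ∈ T.descendants c := (hcomp c hcr y).2
          ⟨hy, hyr, hreachcx.tail ⟨⟨hx, hxr⟩, ⟨hy, hyr⟩, hadj⟩⟩
        rcases ih c hcr x y hadj (show x ∈ (T.subtreeAt c).supp from hxdesc)
            (show y ∈ (T.subtreeAt c).supp from hydesc) with h' | h'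
        · exact Or.inl (subtreeAt_anc_sub h')
        · exact Or.inr (subtreeAt_anc_sub h')

end Structural


section Twins

open Relation

variable {V : Type u} {G : SimpleGraph V} {S : RTree V} {u v : V}

lemma st_root_none (hS : IsSearchTree G S) : S.parent S.root = none := hS.2.wf.2.1

lemma st_reach (hS : IsSearchTree G S) (x : V) : ReflTransGen S.parentRel x S.root :=
  wf_reach_root hS.2.wf (by rw [hS.1]; trivial)

lemma st_nocycle (hS : IsSearchTree G S) (x : V) : ¬ TransGen S.parentRel x x :=
  no_cycle S (st_root_none hS) (st_reach hS x)

lemma st_antisymm (hS : IsSearchTree G S) {x y : V} (h1 : ReflTransGen S.parentRel x y)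
    (h2 : ReflTransGen S.parentRel y x) : x = y :=
  rtg_antisymm S (st_root_none hS) (st_reach hS x) h1 h2

lemma st_comparable (hS : IsSearchTree G S) (hadj : G.Adj u v) :
    S.isAncestor u v ∨ S.isAncestor v u :=
  comparable_of_adj hS.2 u v hadj (by rw [hS.1]; trivial) (by rw [hS.1]; trivial)

lemma st_not_anc_iff (hS : IsSearchTree G S) (hne : u ≠ v) (hadj : G.Adj u v) :
    ¬ S.isAncestor u v ↔ S.isAncestor v u := by
  constructor
  · intro h
    rcases st_comparable hS hadj with h' | h'
    · exact absurd h' h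
    · exact h'
  · intro h hc
    exact hne (st_antisymm hS (show ReflTransGen S.parentRel u v from h)
      (show ReflTransGen S.parentRel v u from hc))

lemma unique_child (hS : IsSearchTree G S) (hne : u ≠ v)
    (htwin : ∀ z, z ≠ u → z ≠ v → (G.Adj u z ↔ G.Adj v z))
    (hpr : S.parent v = some u) : ∀ w, S.parent w = some u → w = v := by
  intro w hw
  by_contra hwv
  have hST := hS.2
  have hwf := hST.wf
  have husupp : u ∈ S.supp := by rw [hS.1]; trivial
  have hSu : IsSearchTreeRec G (S.subtreeAt u) := searchTreeRec_subtreeAt hST u husupp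
  have hvd : v ∈ S.descendants u := ⟨by rw [hS.1]; trivial, ReflTransGen.single hpr⟩
  have hvu : v ≠ u := Ne.symm hne
  have hwd : w ∈ S.descendants u := ⟨by rw [hS.1]; trivial, ReflTransGen.single hw⟩
  have hwu : w ≠ u := by
    rintro rfl
    exact st_nocycle hS w (TransGen.single hw)
  have hpv' : (S.subtreeAt u).parent v = some u := by
    rw [subtreeAt_parent_eq hvd hvu]; exact hpr
  have hpw' : (S.subtreeAt u).parent w = some u := by
    rw [subtreeAt_parent_eq hwd hwu]; exact hw
  obtain ⟨z, hadjz, hzdesc⟩ := child_nbr hSu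
    (show (S.subtreeAt u).parent w = some (S.subtreeAt u).root from hpw')
  have hadjz' : G.Adj u z := hadjz
  have hzS : ReflTransGen S.parentRel z w := subtreeAt_anc_sub hzdesc.2
  have hzu : z ≠ u := by
    intro h
    rw [h] at hzS
    exact hwu (st_antisymm hS (ReflTransGen.single hw) hzS)
  have hzv : z ≠ v := by
    intro h
    rw [h] at hzS
    by_cases hvw : v = w
    · exact hwv hvw.symm
    · exact hwu (st_antisymm hS (ReflTransGen.single hw) (rtg_next S hzS hvw hpr))
  have hadjvz : G.Adj v z := (htwin z hzu hzv).1 hadjz'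
  have hreach : reachWithin G ((S.subtreeAt u).supp \ {(S.subtreeAt u).root}) w z :=
    ((hSu.comp w hpw' z).1 hzdesc).2.2
  have hzmem : z ∈ (S.subtreeAt u).supp \ {(S.subtreeAt u).root} := ⟨hzdesc.1, hzu⟩
  have hvmem : v ∈ (S.subtreeAt u).supp \ {(S.subtreeAt u).root} := ⟨hvd, hvu⟩
  have hvin : v ∈ (S.subtreeAt u).descendants w := (hSu.comp w hpw' v).2
    ⟨hvd, hvu, hreach.tail ⟨hzmem, hvmem, hadjvz.symm⟩⟩
  have h2 : ReflTransGen S.parentRel v w := subtreeAt_anc_sub hvin.2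
  by_cases hvw : v = w
  · exact hwv hvw.symm
  · have h3 : ReflTransGen S.parentRel u w := rtg_next S h2 hvw hpr
    exact hwu (st_antisymm hS (ReflTransGen.single hw) h3)

lemma child_subtree_nbr (hS : IsSearchTree G S) (hne : u ≠ v)
    (htwin : ∀ z, z ≠ u → z ≠ v → (G.Adj u z ↔ G.Adj v z))
    (hpr : S.parent v = some u) : ∀ w, S.parent w = some v →
      ∃ z ∈ S.descendants w, G.Adj u z := by
  intro w hw
  have hST := hS.2
  have hvsupp : v ∈ S.supp := by rw [hS.1]; trivial
  have hSv : IsSearchTreeRec G (S.subtreeAt v) := searchTreeRec_subtreeAt hST v hvsupp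
  have hwv : w ≠ v := by
    rintro rfl
    exact st_nocycle hS w (TransGen.single hw)
  have hwd : w ∈ S.descendants v := ⟨by rw [hS.1]; trivial, ReflTransGen.single hw⟩
  have hpw' : (S.subtreeAt v).parent w = some v := by
    rw [subtreeAt_parent_eq hwd hwv]; exact hw
  obtain ⟨z, hadjvz, hzdesc⟩ := child_nbr hSv
    (show (S.subtreeAt v).parent w = some (S.subtreeAt v).root from hpw')
  have hadjvz' : G.Adj v z := hadjvz
  have hzS : ReflTransGen S.parentRel z w := subtreeAt_anc_sub hzdesc.2
  have hzvanc : ReflTransGen S.parentRel z v := hzdesc.1.2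
  have hzu : z ≠ u := by
    intro h
    rw [h] at hzvanc
    exact hne (st_antisymm hS hzvanc (ReflTransGen.single hpr))
  have hzv : z ≠ v := by
    intro h
    rw [h] at hzS
    exact hwv (st_antisymm hS (ReflTransGen.single hw) hzS)
  exact ⟨z, ⟨by rw [hS.1]; trivial, hzS⟩, (htwin z hzu hzv).2 hadjvz'⟩

end Twins


section LemmaC

open Relation

variable {V : Type u} {G : SimpleGraph V} {S : RTree V} {u v : V}

lemma uvstep_swap (hS : IsSearchTree G S) (hne : u ≠ v) (hadj : G.Adj u v)
    (htwin : ∀ z, z ≠ u → z ≠ v → (G.Adj u z ↔ G.Adj v z))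
    (hpr : S.parent v = some u) : rotate G S u v = mapInv (swapMap u v) S := by
  have hσ : Function.Involutive (swapMap u v) := swapMap_invol u v
  apply RTree.ext'
  · show S.supp = swapMap u v '' S.supp
    rw [hS.1, Set.image_univ, hσ.surjective.range_eq]
  · show (if S.root = u then v else S.root) = swapMap u v S.root
    have hrv : S.root ≠ v := by
      intro h
      rw [← h, st_root_none hS] at hpr
      exact nomatch hpr
    by_cases hru : S.root = u
    · rw [if_pos hru, hru, swapMap_left]
    · rw [if_neg hru]
      simp [swapMap, hru, hrv]
  · funext w
    show (rotate G S u v).parent w = Option.map (swapMap u v) (S.parent (swapMap u v w))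
    by_cases h1 : w = v
    · rw [h1]
      rw [show (rotate G S u v).parent v = S.parent u from by simp [rotate], swapMap_right]
      rcases hpu : S.parent u with _ | p
      · rfl
      · have hpu' : S.parentRel u p := hpu
        have hp1 : p ≠ u := by
          rintro rfl
          exact st_nocycle hS p (TransGen.single hpu')
        have hp2 : p ≠ v := by
          rintro rfl
          exact st_nocycle hS u (TransGen.head hpu' (TransGen.single hpr))
        show some p = some (swapMap u v p)
        simp [swapMap, hp1, hp2]
    · by_cases h2 : w = u
      · rw [h2]
        rw [swapMap_left, hpr]
        rw [show (rotate G S u v).parent u = some v from by simp [rotate, hne, h1]]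
        show some v = some (swapMap u v u)
        rw [swapMap_left]
      · have hσw : swapMap u v w = w := by simp [swapMap, h1, h2]
        rw [hσw]
        by_cases h3 : S.parent w = some v
        · obtain ⟨z, hz, hadjz⟩ := child_subtree_nbr hS hne htwin hpr w h3
          have hcond : ∃ z ∈ S.descendants w, G.Adj u z := ⟨z, hz, hadjz⟩
          rw [show (rotate G S u v).parent w = some u from by
            simp [rotate, h1, h2, h3, hcond]]
          rw [h3]
          show some u = some (swapMap u v v)
          rw [swapMap_right]
        · by_cases h4 : S.parent w = some u
          · exact absurd (unique_child hS hne htwin hpr w h4) h1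
          · rw [rotate_parent_other G S h1 h2 h3]
            rcases hpw : S.parent w with _ | p
            · rfl
            · have hp1 : p ≠ v := by rintro rfl; exact h3 hpw
              have hp2 : p ≠ u := by rintro rfl; exact h4 hpw
              show some p = some (swapMap u v p)
              simp [swapMap, hp1, hp2]

lemma uvstep_eq {S' : RTree V} (hS : IsSearchTree G S) (hne : u ≠ v) (hadj : G.Adj u v)
    (htwin : ∀ z, z ≠ u → z ≠ v → (G.Adj u z ↔ G.Adj v z))
    (h : isUVStep G u v S S') : S' = mapInv (swapMap u v) S := by
  rcases h with ⟨hpr, rfl⟩ | ⟨hpr, rfl⟩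
  · exact uvstep_swap hS hne hadj htwin hpr
  · have := uvstep_swap (u := v) (v := u) hS (Ne.symm hne) hadj.symm
      (fun z hzv hzu => (htwin z hzu hzv).symm) hpr
    rwa [swapMap_comm v u] at this

end LemmaC


section MainAux

open Relation

variable {V : Type u} {G : SimpleGraph V} {u v : V}

lemma swap_adj (hne : u ≠ v) (hadj : G.Adj u v)
    (htwin : ∀ z, z ≠ u → z ≠ v → (G.Adj u z ↔ G.Adj v z)) :
    ∀ a b, G.Adj (swapMap u v a) (swapMap u v b) ↔ G.Adj a b := by
  have hσ := swapMap_invol u v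
  have mono : ∀ x y, G.Adj x y → G.Adj (swapMap u v x) (swapMap u v y) := by
    intro x y hxy
    by_cases hx1 : x = u
    · rw [hx1, swapMap_left]
      rw [hx1] at hxy
      by_cases hy1 : y = u
      · rw [hy1] at hxy; exact absurd hxy (G.loopless.irrefl u)
      · by_cases hy2 : y = v
        · rw [hy2] at hxy ⊢; rw [swapMap_right]; exact hxy.symm
        · rw [show swapMap u v y = y from by simp [swapMap, hy1, hy2]]
          exact (htwin y hy1 hy2).1 hxy
    · by_cases hx2 : x = v
      · rw [hx2, swapMap_right]
        rw [hx2] at hxy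
        by_cases hy1 : y = u
        · rw [hy1] at hxy ⊢; rw [swapMap_left]; exact hxy.symm
        · by_cases hy2 : y = v
          · rw [hy2] at hxy; exact absurd hxy (G.loopless.irrefl v)
          · rw [show swapMap u v y = y from by simp [swapMap, hy1, hy2]]
            exact (htwin y hy1 hy2).2 hxy
      · rw [show swapMap u v x = x from by simp [swapMap, hx1, hx2]]
        by_cases hy1 : y = u
        · rw [hy1, swapMap_left]
          rw [hy1] at hxy
          exact ((htwin x hx1 hx2).1 hxy.symm).symm
        · by_cases hy2 : y = v
          · rw [hy2, swapMap_right]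
            rw [hy2] at hxy
            exact ((htwin x hx1 hx2).2 hxy.symm).symm
          · rw [show swapMap u v y = y from by simp [swapMap, hy1, hy2]]
            exact hxy
  intro a b
  constructor
  · intro h
    have := mono _ _ h
    rwa [hσ, hσ] at this
  · exact mono a b

end MainAux

/-- if `u`, `v` are true twins of `G`, every shortest path between search
trees `T` and `T'` in `R(G)` contains exactly one `uv`-rotation edge if `u`, `v` have
different relative order in `T` and `T'`, and none otherwise. -/
theorem shortestPath_uv_rotations_trueTwins {V : Type u} [Fintype V] (G : SimpleGraph V)
    (hG : G.Connected) (u v : V) (hne : u ≠ v) (hadj : G.Adj u v)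
    (htwin : ∀ z, z ≠ u → z ≠ v → (G.Adj u z ↔ G.Adj v z))
    (T T' : RTree V) (hT : IsSearchTree G T) (hT' : IsSearchTree G T')
    (n : ℕ) (Wk : ℕ → RTree V) (h0 : Wk 0 = T) (hn : Wk n = T')
    (hwalk : ∀ k < n, IsSearchTree G (Wk k) ∧ IsRotation G (Wk k) (Wk (k + 1)))
    (hpath : ∀ k l, k ≤ n → l ≤ n → Wk k = Wk l → k = l)
    (hmin : ∀ (m : ℕ) (Wk' : ℕ → RTree V), Wk' 0 = T → Wk' m = T' →
      (∀ k < m, IsSearchTree G (Wk' k) ∧ IsRotation G (Wk' k) (Wk' (k + 1))) → n ≤ m) :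
    (diffRelOrder T T' u v →
      ((Finset.range n).filter
        (fun k => isUVStep G u v (Wk k) (Wk (k + 1)))).card = 1)
    ∧ (¬ diffRelOrder T T' u v →
      ((Finset.range n).filter
        (fun k => isUVStep G u v (Wk k) (Wk (k + 1)))).card = 0) := by
  classical
  have hσ := swapMap_invol u v
  have hσG := swap_adj hne hadj htwin
  have hWST : ∀ k ≤ n, IsSearchTree G (Wk k) := by
    intro k hk
    rcases Nat.lt_or_ge k n with h | h
    · exact (hwalk k h).1
    · have : k = n := le_antisymm hk h
      rw [this, hn]; exact hT'
  have hstep : ∀ k, k < n →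
      ((isUVStep G u v (Wk k) (Wk (k+1)) →
        ((Wk (k+1)).isAncestor u v ↔ ¬ (Wk k).isAncestor u v)) ∧
       (¬ isUVStep G u v (Wk k) (Wk (k+1)) →
        ((Wk (k+1)).isAncestor u v ↔ (Wk k).isAncestor u v))) := by
    intro k hk
    have hSk := hWST k (le_of_lt hk)
    have hSk1 := hWST (k+1) (Nat.succ_le_of_lt hk)
    constructor
    · intro hf
      rw [uvstep_eq hSk hne hadj htwin hf, mapInv_anc hσ, swapMap_left, swapMap_right]
      exact (st_not_anc_iff hSk hne hadj).symm
    · intro hnf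
      obtain ⟨a, b, hab, hrot⟩ := (hwalk k hk).2
      have hp1 : ¬(a = u ∧ b = v) := by
        rintro ⟨rfl, rfl⟩; exact hnf (Or.inl ⟨hab, hrot⟩)
      have hp2 : ¬(a = v ∧ b = u) := by
        rintro ⟨rfl, rfl⟩; exact hnf (Or.inr ⟨hab, hrot⟩)
      rw [hrot] at hSk1 ⊢
      constructor
      · intro h'
        by_contra hnn
        have h2 : (Wk k).isAncestor v u := (st_not_anc_iff hSk hne hadj).1 hnn
        have h3 := rotate_pres_anc G (Wk k) (st_root_none hSk) (st_reach hSk) hab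
          (Ne.symm hne) hadj.symm (fun hc => hp2 ⟨hc.1, hc.2⟩) (fun hc => hp1 ⟨hc.1, hc.2⟩)
          (by rw [hSk.1]; trivial) h2
        exact hne (st_antisymm hSk1 h3 h')
      · intro h'
        exact rotate_pres_anc G (Wk k) (st_root_none hSk) (st_reach hSk) hab hne hadj
          hp1 hp2 (by rw [hSk.1]; trivial) h'
  set F := (Finset.range n).filter (fun k => isUVStep G u v (Wk k) (Wk (k + 1))) with hF
  have shortcut : ∀ k1 k2, k1 ∈ F → k2 ∈ F → k1 < k2 → False := by
    intro k1 k2 hk1F hk2F hlt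
    rw [hF, Finset.mem_filter, Finset.mem_range] at hk1F hk2F
    have hk1n : k1 < n := hk1F.1
    have hk2n : k2 < n := hk2F.1
    have hC1 : Wk (k1+1) = mapInv (swapMap u v) (Wk k1) :=
      uvstep_eq (hWST k1 (le_of_lt hk1n)) hne hadj htwin hk1F.2
    have hC2 : Wk (k2+1) = mapInv (swapMap u v) (Wk k2) :=
      uvstep_eq (hWST k2 (le_of_lt hk2n)) hne hadj htwin hk2F.2
    have hC1' : mapInv (swapMap u v) (Wk (k1+1)) = Wk k1 := by
      rw [hC1, mapInv_mapInv hσ]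
    have hC2' : mapInv (swapMap u v) (Wk k2) = Wk (k2+1) := hC2.symm
    set W' : ℕ → RTree V := fun j =>
      if j ≤ k1 then Wk j
      else if j ≤ k2 - 1 then mapInv (swapMap u v) (Wk (j+1))
      else Wk (j+2) with hW'
    have W'def : ∀ j, W' j =
        if j ≤ k1 then Wk j
        else if j ≤ k2 - 1 then mapInv (swapMap u v) (Wk (j+1))
        else Wk (j+2) := fun j => rfl
    have hW'a : ∀ j, j ≤ k1 → W' j = Wk j := by
      intro j hj; rw [W'def, if_pos hj]
    have hW'b : ∀ j, k1 ≤ j → j ≤ k2 - 1 → W' j = mapInv (swapMap u v) (Wk (j+1)) := by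
      intro j h1 h2
      by_cases h : j ≤ k1
      · have hj : j = k1 := le_antisymm h h1
        rw [W'def, if_pos h, hj, ← hC1']
      · rw [W'def, if_neg h, if_pos h2]
    have hW'c : ∀ j, k2 - 1 ≤ j → W' j = Wk (j+2) := by
      intro j hj
      by_cases h : j ≤ k1
      · have hj1 : j = k1 := by omega
        have hk21 : k2 = k1 + 1 := by omega
        rw [W'def, if_pos h, hj1]
        have e1 : Wk (k1+1) = Wk k2 := by rw [hk21]
        calc Wk k1 = mapInv (swapMap u v) (Wk (k1+1)) := hC1'.symm
          _ = mapInv (swapMap u v) (Wk k2) := by rw [e1]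
          _ = Wk (k2+1) := hC2'
          _ = Wk (k1+2) := by rw [hk21]
      · by_cases h2 : j ≤ k2 - 1
        · have hj2 : j = k2 - 1 := le_antisymm h2 hj
          rw [W'def, if_neg h, if_pos h2, hj2]
          have e : k2 - 1 + 1 = k2 := by omega
          rw [e, hC2']
          have e2 : k2 - 1 + 2 = k2 + 1 := by omega
          rw [e2]
        · rw [W'def, if_neg h, if_neg h2]
    have hW'0 : W' 0 = T := by rw [hW'a 0 (Nat.zero_le _), h0]
    have hW'last : W' (n-2) = T' := by
      rw [hW'c (n-2) (by omega)]
      have e : n - 2 + 2 = n := by omega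
      rw [e, hn]
    have hsteps : ∀ k < n - 2, IsSearchTree G (W' k) ∧ IsRotation G (W' k) (W' (k+1)) := by
      intro k hk
      rcases Nat.lt_or_ge k k1 with hr1 | hr1
      · rw [hW'a k (by omega), hW'a (k+1) (by omega)]
        exact hwalk k (by omega)
      · rcases Nat.lt_or_ge k (k2-1) with hr2 | hr2
        · rw [hW'b k hr1 (by omega), hW'b (k+1) (by omega) (by omega)]
          have hw := hwalk (k+1) (by omega)
          exact ⟨mapInv_isSearchTree hσ hσG hw.1, mapInv_isRotation hσ hσG hw.2⟩
        · rw [hW'c k hr2, hW'c (k+1) (by omega)]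
          exact hwalk (k+2) (by omega)
    exact absurd (hmin (n-2) W' hW'0 hW'last hsteps) (by omega)
  have hcard : F.card ≤ 1 := by
    by_contra hgt
    obtain ⟨k1, hk1, k2, hk2, hne12⟩ := Finset.one_lt_card.1 (not_le.1 hgt)
    rcases Nat.lt_trichotomy k1 k2 with h | h | h
    · exact shortcut k1 k2 hk1 hk2 h
    · exact hne12 h
    · exact shortcut k2 k1 hk2 hk1 h
  rcases Nat.le_one_iff_eq_zero_or_eq_one.1 hcard with h0c | h1c
  · have hnone : ∀ k, k < n → ¬ isUVStep G u v (Wk k) (Wk (k+1)) := by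
      intro k hk hfk
      have hmem : k ∈ F := by
        rw [hF, Finset.mem_filter, Finset.mem_range]; exact ⟨hk, hfk⟩
      rw [Finset.card_eq_zero.1 h0c] at hmem
      exact absurd hmem (Finset.notMem_empty k)
    have hiff : ∀ m, m ≤ n → ((Wk m).isAncestor u v ↔ (Wk 0).isAncestor u v) := by
      intro m
      induction m with
      | zero => exact fun _ => Iff.rfl
      | succ m ih =>
        intro hm
        exact ((hstep m (by omega)).2 (hnone m (by omega))).trans (ih (by omega))
    have hPn := hiff n le_rfl
    rw [h0, hn] at hPn
    constructor
    · intro hdiff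
      exfalso
      rcases hdiff with ⟨ha, hb⟩ | ⟨ha, hb⟩
      · exact hb (hPn.2 ha)
      · exact ha (hPn.1 hb)
    · intro _; exact h0c
  · obtain ⟨k0, hk0⟩ := Finset.card_eq_one.1 h1c
    have hk0F : k0 ∈ F := by rw [hk0]; exact Finset.mem_singleton_self k0
    have hk0n : k0 < n := by
      rw [hF, Finset.mem_filter, Finset.mem_range] at hk0F; exact hk0F.1
    have hfk0 : isUVStep G u v (Wk k0) (Wk (k0+1)) := by
      rw [hF, Finset.mem_filter] at hk0F; exact hk0F.2
    have hothers : ∀ k, k < n → k ≠ k0 → ¬ isUVStep G u v (Wk k) (Wk (k+1)) := by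
      intro k hk hkne hfk
      have hmem : k ∈ F := by
        rw [hF, Finset.mem_filter, Finset.mem_range]; exact ⟨hk, hfk⟩
      rw [hk0] at hmem
      exact hkne (Finset.mem_singleton.1 hmem)
    have hiff : ∀ m, m ≤ n →
        ((m ≤ k0 → ((Wk m).isAncestor u v ↔ (Wk 0).isAncestor u v)) ∧
         (k0 < m → ((Wk m).isAncestor u v ↔ ¬ (Wk 0).isAncestor u v))) := by
      intro m
      induction m with
      | zero =>
        exact fun _ => ⟨fun _ => Iff.rfl, fun h => absurd h (Nat.not_lt_zero k0)⟩
      | succ m ih =>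
        intro hm
        obtain ⟨ih1, ih2⟩ := ih (by omega)
        constructor
        · intro hle
          exact ((hstep m (by omega)).2 (hothers m (by omega) (by omega))).trans
            (ih1 (by omega))
        · intro hlt
          by_cases hmk : m = k0
          · subst hmk
            exact ((hstep m (by omega)).1 hfk0).trans (not_congr (ih1 le_rfl))
          · exact ((hstep m (by omega)).2 (hothers m (by omega) hmk)).trans
              (ih2 (by omega))
    have hPn := (hiff n le_rfl).2 hk0n
    rw [h0, hn] at hPn
    have hdiff : diffRelOrder T T' u v := by
      by_cases hT0 : T.isAncestor u v
      · exact Or.inl ⟨hT0, fun hc => (hPn.1 hc) hT0⟩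
      · exact Or.inr ⟨hT0, hPn.2 hT0⟩
    exact ⟨fun _ => h1c, fun hnd => absurd hdiff hnd⟩
end
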